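/- arXiv:1105.1888 — 11 statements merged into one kernel-verified Lean document; each statement's English description precedes it below -/
import Mathlib

section
/- Let a > 0, let m = (m_1,...,m_n) and M = (M_1,...,M_n) be vectors arranged in nonincreasing order with 0 ≤ m_i ≤ M_i for all i, and ⟨m,s^n⟩ ≤ a ≤ ⟨M,s^n⟩. Let k ≥ 0 be the smallest integer such that ⟨M,s^k⟩ + ⟨m,v^k⟩ ≤ a < ⟨M,s^{k+1}⟩ + ⟨m,v^{k+1}⟩, and set θ = a − ⟨M,s^k⟩ − ⟨m,v^{k+1}⟩. Then the vector x* = M∘s^k + θ e^{k+1} + m∘v^{k+1} belongs to S_a and every x ∈ S_a is majorized by x*, i.e. x ⊴ x* for all x ∈ S_a. -/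
open Finset

noncomputable section

/-- `sv n j` is the vector `s^j ∈ ℝ^n`: first `j` components equal `1`, the rest `0`. -/
def sv (n j : ℕ) : Fin n → ℝ := fun i => if (i : ℕ) < j then 1 else 0

/-- `vv n j = s^n - s^j`: first `j` components equal `0`, the rest `1`. -/
def vv (n j : ℕ) : Fin n → ℝ := fun i => if (i : ℕ) < j then 0 else 1

/-- `ev n j` is the `j`-th standard basis vector (`j` counted from `1`). -/
def ev (n j : ℕ) : Fin n → ℝ := fun i => if (i : ℕ) + 1 = j then 1 else 0

/-- Standard inner product on `ℝ^n`. -/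
def inn {n : ℕ} (x y : Fin n → ℝ) : ℝ := ∑ i, x i * y i

/-- Hadamard (componentwise) product. -/
def had {n : ℕ} (x y : Fin n → ℝ) : Fin n → ℝ := fun i => x i * y i

/-- Sum of the first `k` components. -/
def psum {n : ℕ} (x : Fin n → ℝ) (k : ℕ) : ℝ := ∑ i : Fin n, if (i : ℕ) < k then x i else 0

/-- Majorization order: `x ⊴ y` (for vectors with nonincreasing components). -/
def Maj {n : ℕ} (x y : Fin n → ℝ) : Prop :=
  (∀ k : ℕ, 1 ≤ k → k ≤ n - 1 → psum x k ≤ psum y k) ∧ (∑ i, x i = ∑ i, y i)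

/-- `Σ_a = {x ∈ ℝ^n : x_1 ≥ ... ≥ x_n ≥ 0, Σ x_i = a}`. -/
def SigmaSet (n : ℕ) (a : ℝ) : Set (Fin n → ℝ) :=
  {x | (∀ i j : Fin n, i ≤ j → x j ≤ x i) ∧ (∀ i, 0 ≤ x i) ∧ (∑ i, x i = a)}

lemma sum_ite_eq_val {n : ℕ} (j : ℕ) (hj : j < n) (f : Fin n → ℝ) :
    ∑ i : Fin n, (if (i : ℕ) = j then f i else 0) = f ⟨j, hj⟩ := by
  have h : ∀ i : Fin n, (if (i : ℕ) = j then f i else 0) = (if i = ⟨j, hj⟩ then f i else 0) := by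
    intro i; simp [Fin.ext_iff]
  rw [Finset.sum_congr rfl fun i _ => h i, Finset.sum_ite_eq']
  simp

lemma inn_sv_succ {n : ℕ} (M : Fin n → ℝ) (j : ℕ) (hj : j < n) :
    inn M (sv n (j + 1)) = inn M (sv n j) + M ⟨j, hj⟩ := by
  unfold inn sv
  have h : ∀ i : Fin n, M i * (if (i : ℕ) < j + 1 then 1 else 0) =
      M i * (if (i : ℕ) < j then 1 else 0) + (if (i : ℕ) = j then M i else 0) := by
    intro i
    rcases Nat.lt_trichotomy (i : ℕ) j with h | h | h
    · have h1 : (i : ℕ) < j + 1 := by omega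
      have h2 : (i : ℕ) ≠ j := by omega
      simp [h, h1, h2]
    · have h1 : (i : ℕ) < j + 1 := by omega
      have h2 : ¬ ((i : ℕ) < j) := by omega
      simp [h, h1, h2]
    · have h1 : ¬ ((i : ℕ) < j + 1) := by omega
      have h2 : ¬ ((i : ℕ) < j) := by omega
      have h3 : (i : ℕ) ≠ j := by omega
      simp [h1, h2, h3]
  rw [Finset.sum_congr rfl fun i _ => h i, Finset.sum_add_distrib, sum_ite_eq_val j hj]

lemma inn_vv_succ {n : ℕ} (m : Fin n → ℝ) (j : ℕ) (hj : j < n) :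
    inn m (vv n j) = m ⟨j, hj⟩ + inn m (vv n (j + 1)) := by
  unfold inn vv
  have h : ∀ i : Fin n, m i * (if (i : ℕ) < j then 0 else 1) =
      (if (i : ℕ) = j then m i else 0) + m i * (if (i : ℕ) < j + 1 then 0 else 1) := by
    intro i
    rcases Nat.lt_trichotomy (i : ℕ) j with h | h | h
    · have h1 : (i : ℕ) < j + 1 := by omega
      have h2 : (i : ℕ) ≠ j := by omega
      simp [h, h1, h2]
    · have h1 : (i : ℕ) < j + 1 := by omega
      have h2 : ¬ ((i : ℕ) < j) := by omega
      simp [h, h1, h2]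
    · have h1 : ¬ ((i : ℕ) < j + 1) := by omega
      have h2 : ¬ ((i : ℕ) < j) := by omega
      have h3 : (i : ℕ) ≠ j := by omega
      simp [h1, h2, h3]
  rw [Finset.sum_congr rfl fun i _ => h i, Finset.sum_add_distrib, sum_ite_eq_val j hj]

/-- The vector `x* = M∘s^k + θ e^{k+1} + m∘v^{k+1}` belongs to `S_a` and majorizes
every element of `S_a`. -/
theorem maximal_element_of_Sa (n : ℕ) (a : ℝ) (ha : 0 < a) (m M : Fin n → ℝ)
    (hm_dec : ∀ i j : Fin n, i ≤ j → m j ≤ m i)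
    (hM_dec : ∀ i j : Fin n, i ≤ j → M j ≤ M i)
    (hmM : ∀ i, 0 ≤ m i ∧ m i ≤ M i)
    (hma : inn m (sv n n) ≤ a) (haM : a ≤ inn M (sv n n))
    (k : ℕ)
    (hk : inn M (sv n k) + inn m (vv n k) ≤ a ∧
          a < inn M (sv n (k + 1)) + inn m (vv n (k + 1)))
    (hkmin : ∀ j : ℕ,
      (inn M (sv n j) + inn m (vv n j) ≤ a ∧
        a < inn M (sv n (j + 1)) + inn m (vv n (j + 1))) → k ≤ j)
    (θ : ℝ) (hθ : θ = a - inn M (sv n k) - inn m (vv n (k + 1)))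
    (xstar : Fin n → ℝ)
    (hxstar : xstar = fun i => had M (sv n k) i + θ * ev n (k + 1) i + had m (vv n (k + 1)) i)
    (Sa : Set (Fin n → ℝ))
    (hSa : Sa = SigmaSet n a ∩ {x | ∀ i, m i ≤ x i ∧ x i ≤ M i}) :
    xstar ∈ Sa ∧ ∀ x ∈ Sa, Maj x xstar := by
  -- First, `k < n`.
  have hkn : k < n := by
    by_contra h
    push_neg at h
    have h1 : sv n k = sv n (k + 1) := by
      funext i
      have : (i : ℕ) < k := lt_of_lt_of_le i.isLt h
      simp [sv, this, Nat.lt_succ_of_lt this]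
    have h2 : vv n k = vv n (k + 1) := by
      funext i
      have : (i : ℕ) < k := lt_of_lt_of_le i.isLt h
      simp [vv, this, Nat.lt_succ_of_lt this]
    rw [h1, h2] at hk
    linarith [hk.1, hk.2]
  set kF : Fin n := ⟨k, hkn⟩ with hkF
  have hsv : inn M (sv n (k + 1)) = inn M (sv n k) + M kF := inn_sv_succ M k hkn
  have hvv : inn m (vv n k) = m kF + inn m (vv n (k + 1)) := inn_vv_succ m k hkn
  have hθ1 : m kF ≤ θ := by
    have := hk.1; rw [hvv] at this; rw [hθ]; linarith
  have hθ2 : θ < M kF := by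
    have := hk.2; rw [hsv] at this; rw [hθ]; linarith
  -- Component formulas for `xstar`.
  have hx_lt : ∀ i : Fin n, (i : ℕ) < k → xstar i = M i := by
    intro i hi
    have h2 : (i : ℕ) ≠ k := by omega
    have h3 : (i : ℕ) < k + 1 := by omega
    simp [hxstar, had, sv, ev, vv, hi, h2, h3]
    intro h; omega
  have hx_eq : xstar kF = θ := by
    simp [hxstar, had, sv, ev, vv, hkF]
  have hx_gt : ∀ i : Fin n, k < (i : ℕ) → xstar i = m i := by
    intro i hi
    have h1 : ¬ ((i : ℕ) < k) := by omega
    have h2 : (i : ℕ) ≠ k := by omega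
    have h3 : ¬ ((i : ℕ) < k + 1) := by omega
    simp [hxstar, had, sv, ev, vv, h1, h2, h3]
    intro h; omega
  -- The sum of `xstar` is `a`.
  have hev : ∑ i : Fin n, θ * ev n (k + 1) i = θ := by
    unfold ev
    have h : ∀ i : Fin n, θ * (if (i : ℕ) + 1 = k + 1 then 1 else 0) =
        (if (i : ℕ) = k then θ else 0) := by
      intro i
      by_cases h : (i : ℕ) = k
      · have : (i : ℕ) + 1 = k + 1 := by omega
        simp [h, this]
      · have : ¬ ((i : ℕ) + 1 = k + 1) := by omega
        simp [h, this]
    rw [Finset.sum_congr rfl fun i _ => h i, sum_ite_eq_val k hkn]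
  have hsum_xstar : ∑ i, xstar i = a := by
    rw [hxstar, Finset.sum_add_distrib, Finset.sum_add_distrib]
    have e1 : ∑ i : Fin n, had M (sv n k) i = inn M (sv n k) := rfl
    have e3 : ∑ i : Fin n, had m (vv n (k + 1)) i = inn m (vv n (k + 1)) := rfl
    rw [e1, e3, hev, hθ]; ring
  -- Bounds on components.
  have hbound : ∀ i : Fin n, m i ≤ xstar i ∧ xstar i ≤ M i := by
    intro i
    rcases Nat.lt_trichotomy (i : ℕ) k with h | h | h
    · rw [hx_lt i h]; exact ⟨(hmM i).2, le_refl _⟩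
    · have hik : i = kF := Fin.ext h
      rw [hik, hx_eq]; exact ⟨hθ1, le_of_lt hθ2⟩
    · rw [hx_gt i h]; exact ⟨le_refl _, (hmM i).2⟩
  -- `xstar` is nonincreasing.
  have hdec : ∀ i j : Fin n, i ≤ j → xstar j ≤ xstar i := by
    intro i j hij
    have hij' : (i : ℕ) ≤ (j : ℕ) := hij
    rcases Nat.lt_trichotomy (j : ℕ) k with hj | hj | hj
    · rw [hx_lt j hj, hx_lt i (lt_of_le_of_lt hij' hj)]
      exact hM_dec i j hij
    · have hjk : j = kF := Fin.ext hj
      rcases Nat.lt_trichotomy (i : ℕ) k with hi | hi | hi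
      · have hiKF : i ≤ kF := Fin.le_def.mpr (le_of_lt hi)
        rw [hjk, hx_eq, hx_lt i hi]
        exact le_trans (le_of_lt hθ2) (hM_dec i kF hiKF)
      · have hik : i = kF := Fin.ext hi
        rw [hik, hjk]
      · omega
    · rw [hx_gt j hj]
      rcases Nat.lt_trichotomy (i : ℕ) k with hi | hi | hi
      · have hiKF : i ≤ kF := Fin.le_def.mpr (le_of_lt hi)
        have hkFj : kF ≤ j := Fin.le_def.mpr (le_of_lt hj)
        rw [hx_lt i hi]
        calc m j ≤ m kF := hm_dec kF j hkFj
          _ ≤ θ := hθ1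
          _ ≤ M kF := le_of_lt hθ2
          _ ≤ M i := hM_dec i kF hiKF
      · have hkFj : kF ≤ j := Fin.le_def.mpr (le_of_lt hj)
        have hik : i = kF := Fin.ext hi
        rw [hik, hx_eq]
        exact le_trans (hm_dec kF j hkFj) hθ1
      · rw [hx_gt i hi]; exact hm_dec i j hij
  have hmem : xstar ∈ Sa := by
    rw [hSa]
    exact ⟨⟨hdec, fun i => le_trans (hmM i).1 (hbound i).1, hsum_xstar⟩, hbound⟩
  refine ⟨hmem, fun x hx => ?_⟩
  rw [hSa] at hx
  obtain ⟨⟨hxdec, hxpos, hxsum⟩, hxbd⟩ := hx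
  constructor
  · intro j hj1 hj2
    by_cases hjk : j ≤ k
    · unfold psum
      apply Finset.sum_le_sum
      intro i _
      split_ifs with hij
      · rw [hx_lt i (lt_of_lt_of_le hij hjk)]
        exact (hxbd i).2
      · exact le_refl 0
    · push_neg at hjk
      have hsplit : ∀ y : Fin n → ℝ,
          ∑ i, y i = psum y j + ∑ i : Fin n, (if (i : ℕ) < j then 0 else y i) := by
        intro y
        unfold psum
        rw [← Finset.sum_add_distrib]
        exact Finset.sum_congr rfl fun i _ => by split_ifs <;> simp
      have h1 := hsplit x
      have h2 := hsplit xstar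
      rw [hxsum] at h1
      rw [hsum_xstar] at h2
      have htail : ∑ i : Fin n, (if (i : ℕ) < j then 0 else xstar i) ≤
          ∑ i : Fin n, (if (i : ℕ) < j then 0 else x i) := by
        apply Finset.sum_le_sum
        intro i _
        split_ifs with hij
        · exact le_refl 0
        · push_neg at hij
          rw [hx_gt i (lt_of_lt_of_le hjk hij)]
          exact (hxbd i).1
      linarith
  · rw [hxsum, hsum_xstar]
end
end

section
/- Let 1 ≤ h ≤ n, 0 ≤ m_2 ≤ m_1, 0 ≤ M_2 ≤ M_1, m_i < M_i for i = 1,2, and h·m_1 + (n−h)·m_2 ≤ a ≤ h·M_1 + (n−h)·M_2. Set a* = h·M_1 + (n−h)·m_2. If a < a*, let k = ⌊(a − h(m_1 − m_2) − n·m_2)/(M_1 − m_1)⌋ and θ = a − ⟨M, s^k⟩ − ⟨m, v^{k+1}⟩ where M = M_1 s^h + M_2 v^h and m = m_1 s^h + m_2 v^h. Then the maximal element of S_a^[h] with respect to the majorization order is the vector whose first k components equal M_1, whose (k+1)-st component equals θ, whose next h−k−1 components equal m_1, and whose last n−h components equal m_2. -/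
open Finset

noncomputable section

/-- `S_a^[h] = Σ_a ∩ {x : M₁ ≥ x_1 ≥ ... ≥ x_h ≥ m₁, M₂ ≥ x_{h+1} ≥ ... ≥ x_n ≥ m₂}`. -/
def Sh (n h : ℕ) (a M1 M2 m1 m2 : ℝ) : Set (Fin n → ℝ) :=
  SigmaSet n a ∩
    {x | (∀ i : Fin n, (i : ℕ) < h → m1 ≤ x i ∧ x i ≤ M1) ∧
         (∀ i : Fin n, h ≤ (i : ℕ) → m2 ≤ x i ∧ x i ≤ M2)}

lemma sum_if_lt (n j : ℕ) (hj : j ≤ n) (c d : ℝ) :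
    ∑ i : Fin n, (if (i : ℕ) < j then c else d) = j * c + ((n : ℝ) - j) * d := by
  rw [Fin.sum_univ_eq_sum_range (fun i => if i < j then c else d)]
  rw [Finset.sum_ite]
  have h1 : Finset.filter (fun i => i < j) (Finset.range n) = Finset.range j := by
    ext i; simp; omega
  have h2 : (Finset.filter (fun i => ¬ i < j) (Finset.range n)).card = n - j := by
    have h3 := Finset.card_filter_add_card_filter_not
      (s := Finset.range n) (p := fun i => i < j)
    rw [h1] at h3
    simp at h3 ⊢
    omega
  rw [h1, Finset.sum_const, Finset.sum_const, Finset.card_range, h2]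
  have : ((n - j : ℕ) : ℝ) = (n : ℝ) - j := by push_cast [hj]; ring
  simp [this]


set_option maxHeartbeats 1000000 in
/-- Corollary 3 (case `a < a*`): the maximal element of `S_a^[h]`. -/
theorem maximal_element_of_Sh_below (n h : ℕ) (hh : 1 ≤ h) (hhn : h ≤ n)
    (a m1 m2 M1 M2 : ℝ) (ha : 0 < a)
    (hm2 : 0 ≤ m2) (hm21 : m2 ≤ m1) (hM2 : 0 ≤ M2) (hM21 : M2 ≤ M1)
    (hmM1 : m1 < M1) (hmM2 : m2 < M2)
    (halow : h * m1 + (n - h : ℝ) * m2 ≤ a) (haup : a ≤ h * M1 + (n - h : ℝ) * M2)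
    (astar : ℝ) (hastar : astar = h * M1 + (n - h : ℝ) * m2)
    (hcase : a < astar)
    (k : ℕ) (hk : (k : ℤ) = ⌊(a - h * (m1 - m2) - n * m2) / (M1 - m1)⌋)
    (Mv mv : Fin n → ℝ)
    (hMv : Mv = fun i => M1 * sv n h i + M2 * vv n h i)
    (hmv : mv = fun i => m1 * sv n h i + m2 * vv n h i)
    (θ : ℝ) (hθ : θ = a - inn Mv (sv n k) - inn mv (vv n (k + 1)))
    (xstar : Fin n → ℝ)
    (hxstar : ∀ i : Fin n, xstar i =
      if (i : ℕ) < k then M1 else if (i : ℕ) = k then θ else if (i : ℕ) < h then m1 else m2) :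
    xstar ∈ Sh n h a M1 M2 m1 m2 ∧ ∀ x ∈ Sh n h a M1 M2 m1 m2, Maj x xstar := by
  have hd : (0:ℝ) < M1 - m1 := by linarith
  -- floor bounds
  have hq1 : ((k:ℝ)) ≤ (a - h * (m1 - m2) - n * m2) / (M1 - m1) := by
    have := Int.floor_le ((a - h * (m1 - m2) - n * m2) / (M1 - m1))
    rw [← hk] at this; exact_mod_cast this
  have hq2 : (a - h * (m1 - m2) - n * m2) / (M1 - m1) < (k:ℝ) + 1 := by
    have := Int.lt_floor_add_one ((a - h * (m1 - m2) - n * m2) / (M1 - m1))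
    rw [← hk] at this; exact_mod_cast this
  have hkle : (k:ℝ) * M1 - (k:ℝ) * m1 ≤ a - (h:ℝ) * m1 - ((n:ℝ) - (h:ℝ)) * m2 := by
    have h1 : (k:ℝ) * (M1 - m1) ≤ a - h * (m1 - m2) - n * m2 :=
      (le_div_iff₀ hd).mp hq1
    nlinarith [h1]
  have hklt : a - (h:ℝ) * m1 - ((n:ℝ) - (h:ℝ)) * m2 < (k:ℝ) * M1 - (k:ℝ) * m1 + (M1 - m1) := by
    have h1 : a - h * (m1 - m2) - n * m2 < ((k:ℝ) + 1) * (M1 - m1) :=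
      (div_lt_iff₀ hd).mp hq2
    nlinarith [h1]
  -- k < h
  have hkhR : (k:ℝ) < (h:ℝ) := by
    rw [hastar] at hcase
    by_contra hcon
    push_neg at hcon
    have : (h:ℝ) * (M1 - m1) ≤ (k:ℝ) * (M1 - m1) := by
      apply mul_le_mul_of_nonneg_right hcon (le_of_lt hd)
    nlinarith
  have hkh : k < h := by exact_mod_cast hkhR
  have hkn : k < n := lt_of_lt_of_le hkh hhn
  -- inner product values
  have hinn1 : inn Mv (sv n k) = (k:ℝ) * M1 := by
    rw [hMv]
    unfold inn sv vv
    have : ∀ i : Fin n,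
        (M1 * (if (i:ℕ) < h then (1:ℝ) else 0) + M2 * (if (i:ℕ) < h then (0:ℝ) else 1)) *
          (if (i:ℕ) < k then (1:ℝ) else 0) = (if (i:ℕ) < k then M1 else 0) := by
      intro i
      split_ifs <;> first | (exfalso; omega) | ring
    rw [Finset.sum_congr rfl (fun i _ => this i)]
    rw [sum_if_lt n k (le_of_lt hkn) M1 0]
    ring
  have hinn2 : inn mv (vv n (k + 1)) =
      ((h:ℝ) - ((k:ℝ) + 1)) * m1 + ((n:ℝ) - (h:ℝ)) * m2 := by
    rw [hmv]
    unfold inn sv vv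
    have : ∀ i : Fin n,
        (m1 * (if (i:ℕ) < h then (1:ℝ) else 0) + m2 * (if (i:ℕ) < h then (0:ℝ) else 1)) *
          (if (i:ℕ) < k + 1 then (0:ℝ) else 1) =
        (if (i:ℕ) < h then m1 else m2) - (if (i:ℕ) < k + 1 then m1 else 0) := by
      intro i
      split_ifs <;> first | (exfalso; omega) | ring
    rw [Finset.sum_congr rfl (fun i _ => this i)]
    rw [Finset.sum_sub_distrib]
    rw [sum_if_lt n h hhn m1 m2, sum_if_lt n (k+1) (by omega) m1 0]
    push_cast
    ring
  have hθval : θ = a - (k:ℝ) * M1 - ((h:ℝ) - ((k:ℝ) + 1)) * m1 - ((n:ℝ) - (h:ℝ)) * m2 := by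
    rw [hθ, hinn1, hinn2]; ring
  have hθm1 : m1 ≤ θ := by rw [hθval]; linarith
  have hθM1 : θ < M1 := by rw [hθval]; linarith
  -- sum of xstar
  have hpoint : ∀ i : Fin n, xstar i =
      Mv i * sv n k i + (if (i:ℕ) = k then θ else 0) + mv i * vv n (k+1) i := by
    intro i
    rw [hxstar, hMv, hmv]
    simp only [sv, vv]
    split_ifs <;> first | (exfalso; omega) | ring
  have hθsum : ∑ i : Fin n, (if (i:ℕ) = k then θ else 0) = θ := by
    rw [Fin.sum_univ_eq_sum_range (fun i => if i = k then θ else 0)]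
    rw [Finset.sum_ite_eq' (Finset.range n) k (fun _ => θ)]
    simp [hkn]
  have hsum : ∑ i, xstar i = a := by
    rw [Finset.sum_congr rfl (fun i _ => hpoint i)]
    rw [Finset.sum_add_distrib, Finset.sum_add_distrib, hθsum]
    have e1 : ∑ i : Fin n, Mv i * sv n k i = inn Mv (sv n k) := rfl
    have e2 : ∑ i : Fin n, mv i * vv n (k+1) i = inn mv (vv n (k+1)) := rfl
    rw [e1, e2]
    linarith [hθ]
  -- membership
  have hmem : xstar ∈ Sh n h a M1 M2 m1 m2 := by
    refine ⟨⟨?_, ?_, hsum⟩, ?_, ?_⟩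
    · intro i j hij
      have hij' : (i:ℕ) ≤ (j:ℕ) := Fin.le_def.mp hij
      rw [hxstar i, hxstar j]
      split_ifs <;> first | (exfalso; omega) | linarith
    · intro i
      rw [hxstar i]
      split_ifs <;> linarith
    · intro i hi
      rw [hxstar i]
      split_ifs <;> first | (exfalso; omega) | exact ⟨by linarith, by linarith⟩
    · intro i hi
      rw [hxstar i]
      split_ifs <;> first | (exfalso; omega) | exact ⟨le_refl m2, le_of_lt hmM2⟩
  refine ⟨hmem, ?_⟩
  rintro x ⟨⟨hxsort, hxnn, hxsum⟩, hxb1, hxb2⟩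
  constructor
  · intro j hj1 hjn
    by_cases hjk : j ≤ k
    · unfold psum
      apply Finset.sum_le_sum
      intro i _
      split_ifs with hij
      · rw [hxstar i, if_pos (lt_of_lt_of_le hij hjk)]
        exact (hxb1 i (by omega)).2
      · exact le_refl 0
    · push_neg at hjk
      have key : ∀ y : Fin n → ℝ,
          psum y j = (∑ i, y i) - ∑ i : Fin n, (if (i:ℕ) < j then 0 else y i) := by
        intro y
        unfold psum
        rw [← Finset.sum_sub_distrib]
        apply Finset.sum_congr rfl
        intro i _
        split_ifs <;> ring
      rw [key x, key xstar, hxsum, hsum]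
      have htail : ∑ i : Fin n, (if (i:ℕ) < j then 0 else xstar i) ≤
          ∑ i : Fin n, (if (i:ℕ) < j then 0 else x i) := by
        apply Finset.sum_le_sum
        intro i _
        split_ifs with hij
        · exact le_refl 0
        · push_neg at hij
          rw [hxstar i, if_neg (by omega), if_neg (by omega)]
          split_ifs with hih
          · exact (hxb1 i hih).1
          · exact (hxb2 i (by omega)).1
      linarith
  · rw [hxsum, hsum]
end
end

section
/- Let 1 ≤ h ≤ n, 0 ≤ m_2 ≤ m_1, 0 ≤ M_2 ≤ M_1, m_i < M_i for i = 1,2, and h·m_1 + (n−h)·m_2 ≤ a ≤ h·M_1 + (n−h)·M_2. Set a* = h·M_1 + (n−h)·m_2. If a ≥ a*, let k = ⌊(a − h(M_1 − M_2) − n·m_2)/(M_2 − m_2)⌋ and θ = a − ⟨M, s^k⟩ − ⟨m, v^{k+1}⟩ where M = M_1 s^h + M_2 v^h and m = m_1 s^h + m_2 v^h. Then the maximal element of S_a^[h] with respect to the majorization order is the vector whose first h components equal M_1, whose next k−h components equal M_2, whose (k+1)-st component equals θ, and whose last n−k−1 components equal m_2. -/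
open Finset

noncomputable section

lemma sum_Ico_const_of (f : ℕ → ℝ) (c : ℝ) (p q : ℕ)
    (hf : ∀ i, p ≤ i → i < q → f i = c) :
    ∑ i ∈ Finset.Ico p q, f i = ((q - p : ℕ) : ℝ) * c := by
  rw [Finset.sum_congr rfl fun i hi =>
    hf i (Finset.mem_Ico.mp hi).1 (Finset.mem_Ico.mp hi).2]
  rw [Finset.sum_const, Nat.card_Ico, nsmul_eq_mul]

lemma sum_range_ite_lt (g : ℕ → ℝ) (j n : ℕ) (hj : j ≤ n) :
    ∑ i ∈ Finset.range n, (if i < j then g i else 0) = ∑ i ∈ Finset.range j, g i := by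
  rw [Finset.range_eq_Ico, ← Finset.sum_Ico_consecutive _ (Nat.zero_le j) hj]
  have h2 : ∑ i ∈ Finset.Ico j n, (if i < j then g i else 0) = 0 :=
    Finset.sum_eq_zero fun i hi => if_neg (not_lt.mpr (Finset.mem_Ico.mp hi).1)
  rw [h2, add_zero, ← Finset.range_eq_Ico]
  exact Finset.sum_congr rfl fun i hi => if_pos (Finset.mem_range.mp hi)

lemma sum_range_ite_ge (c : ℝ) (j n : ℕ) :
    ∑ i ∈ Finset.range n, (if i < j then 0 else c) = ((n - j : ℕ) : ℝ) * c := by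
  rcases le_or_gt j n with h | h
  · rw [Finset.range_eq_Ico, ← Finset.sum_Ico_consecutive _ (Nat.zero_le j) h]
    have h1 : ∑ i ∈ Finset.Ico 0 j, (if i < j then (0:ℝ) else c) = 0 :=
      Finset.sum_eq_zero fun i hi => if_pos (Finset.mem_Ico.mp hi).2
    rw [h1, zero_add]
    exact sum_Ico_const_of _ c j n fun i hi _ => if_neg (not_lt.mpr hi)
  · have h1 : ∑ i ∈ Finset.range n, (if i < j then (0:ℝ) else c) = 0 :=
      Finset.sum_eq_zero fun i hi => if_pos (lt_of_lt_of_le (Finset.mem_range.mp hi) h.le)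
    rw [h1, Nat.sub_eq_zero_of_le h.le, Nat.cast_zero, zero_mul]

lemma sum_range_two (c d : ℝ) (p j : ℕ) (hpj : p ≤ j) :
    ∑ i ∈ Finset.range j, (if i < p then c else d)
      = (p : ℝ) * c + ((j - p : ℕ) : ℝ) * d := by
  rw [Finset.range_eq_Ico, ← Finset.sum_Ico_consecutive _ (Nat.zero_le p) hpj]
  have h1 : ∑ i ∈ Finset.Ico 0 p, (if i < p then c else d) = ((p - 0 : ℕ) : ℝ) * c :=
    sum_Ico_const_of _ c 0 p fun i _ hi => if_pos hi
  have h2 : ∑ i ∈ Finset.Ico p j, (if i < p then c else d) = ((j - p : ℕ) : ℝ) * d :=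
    sum_Ico_const_of _ d p j fun i hi _ => if_neg (not_lt.mpr hi)
  rw [h1, h2, Nat.sub_zero]

lemma sum_range_four (M1 M2 θ m2 : ℝ) (h k j : ℕ) (hhk : h ≤ k) (hkj : k < j) :
    ∑ i ∈ Finset.range j,
        (if i < h then M1 else if i < k then M2 else if i = k then θ else m2)
      = (h : ℝ) * M1 + ((k - h : ℕ) : ℝ) * M2 + θ + ((j - (k+1) : ℕ) : ℝ) * m2 := by
  rw [Finset.range_eq_Ico,
    ← Finset.sum_Ico_consecutive _ (Nat.zero_le h) (by omega : h ≤ j),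
    ← Finset.sum_Ico_consecutive _ hhk (by omega : k ≤ j),
    ← Finset.sum_Ico_consecutive _ (Nat.le_succ k) (by omega : k + 1 ≤ j)]
  have h1 := sum_Ico_const_of
    (fun i => if i < h then M1 else if i < k then M2 else if i = k then θ else m2)
    M1 0 h (fun i _ hi => if_pos hi)
  have h2 := sum_Ico_const_of
    (fun i => if i < h then M1 else if i < k then M2 else if i = k then θ else m2)
    M2 h k (fun i hi hik => by
      rw [if_neg (not_lt.mpr hi), if_pos hik])
  have h3 := sum_Ico_const_of
    (fun i => if i < h then M1 else if i < k then M2 else if i = k then θ else m2)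
    θ k (k+1) (fun i hi hik => by
      have hik' : i = k := by omega
      subst hik'
      show (if i < h then M1 else if i < i then M2 else if i = i then θ else m2) = θ
      rw [if_neg (not_lt.mpr hhk), if_neg (lt_irrefl i)]
      exact if_pos rfl)
  have h4 := sum_Ico_const_of
    (fun i => if i < h then M1 else if i < k then M2 else if i = k then θ else m2)
    m2 (k+1) j (fun i hi _ => by
      rw [if_neg (by omega : ¬ i < h), if_neg (by omega : ¬ i < k),
        if_neg (by omega : ¬ i = k)])
  rw [h1, h2, h3, h4, Nat.sub_zero, (by omega : k + 1 - k = 1)]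
  push_cast
  ring

/-- Corollary 3 (case `a ≥ a*`): the maximal element of `S_a^[h]`. -/
theorem maximal_element_of_Sh_above (n h : ℕ) (hh : 1 ≤ h) (hhn : h ≤ n)
    (a m1 m2 M1 M2 : ℝ) (ha : 0 < a)
    (hm2 : 0 ≤ m2) (hm21 : m2 ≤ m1) (hM2 : 0 ≤ M2) (hM21 : M2 ≤ M1)
    (hmM1 : m1 < M1) (hmM2 : m2 < M2)
    (halow : h * m1 + (n - h : ℝ) * m2 ≤ a) (haup : a ≤ h * M1 + (n - h : ℝ) * M2)
    (astar : ℝ) (hastar : astar = h * M1 + (n - h : ℝ) * m2)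
    (hcase : astar ≤ a)
    (k : ℕ) (hk : (k : ℤ) = ⌊(a - h * (M1 - M2) - n * m2) / (M2 - m2)⌋)
    (Mv mv : Fin n → ℝ)
    (hMv : Mv = fun i => M1 * sv n h i + M2 * vv n h i)
    (hmv : mv = fun i => m1 * sv n h i + m2 * vv n h i)
    (θ : ℝ) (hθ : θ = a - inn Mv (sv n k) - inn mv (vv n (k + 1)))
    (xstar : Fin n → ℝ)
    (hxstar : ∀ i : Fin n, xstar i =
      if (i : ℕ) < h then M1 else if (i : ℕ) < k then M2 else if (i : ℕ) = k then θ else m2) :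
    xstar ∈ Sh n h a M1 M2 m1 m2 ∧ ∀ x ∈ Sh n h a M1 M2 m1 m2, Maj x xstar := by
  have hn1 : 1 ≤ n := le_trans hh hhn
  have hd : (0:ℝ) < M2 - m2 := by linarith
  have hk_le : (k : ℝ) ≤ (a - h * (M1 - M2) - n * m2) / (M2 - m2) := by
    have h1 := Int.floor_le ((a - h * (M1 - M2) - n * m2) / (M2 - m2))
    rw [← hk] at h1
    exact_mod_cast h1
  have hk_gt : (a - h * (M1 - M2) - n * m2) / (M2 - m2) < (k : ℝ) + 1 := by
    have h1 := Int.lt_floor_add_one ((a - h * (M1 - M2) - n * m2) / (M2 - m2))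
    rw [← hk] at h1
    exact_mod_cast h1
  have hk1 : (k:ℝ) * (M2 - m2) ≤ a - h * (M1 - M2) - n * m2 :=
    (le_div_iff₀ hd).mp hk_le
  have hk2 : a - h * (M1 - M2) - n * m2 < ((k:ℝ) + 1) * (M2 - m2) :=
    (div_lt_iff₀ hd).mp hk_gt
  have hca : (h:ℝ) * M1 + ((n:ℝ) - h) * m2 ≤ a := hastar ▸ hcase
  have hhk : h ≤ k := by
    have h1 : ((h:ℤ):ℝ) ≤ (a - h * (M1 - M2) - n * m2) / (M2 - m2) := by
      push_cast
      rw [le_div_iff₀ hd]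
      linarith
    have h2 := Int.le_floor.mpr h1
    rw [← hk] at h2
    exact_mod_cast h2
  have hkn : k ≤ n := by
    have h1 : (a - h * (M1 - M2) - n * m2) / (M2 - m2) ≤ (n:ℝ) := by
      rw [div_le_iff₀ hd]
      linarith
    have h2 : (k:ℝ) ≤ n := le_trans hk_le h1
    exact_mod_cast h2
  have hckh : ((k - h : ℕ) : ℝ) = (k:ℝ) - h := Nat.cast_sub hhk
  -- inner products
  have hMv_eq : ∀ i : Fin n, Mv i = if (i:ℕ) < h then M1 else M2 := by
    intro i; rw [hMv]; simp only [sv, vv]; split_ifs <;> ring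
  have hmv_eq : ∀ i : Fin n, mv i = if (i:ℕ) < h then m1 else m2 := by
    intro i; rw [hmv]; simp only [sv, vv]; split_ifs <;> ring
  have hinn1 : inn Mv (sv n k) = h * M1 + ((k - h : ℕ):ℝ) * M2 := by
    have e : ∀ i : Fin n, Mv i * sv n k i =
        if (i:ℕ) < k then (if (i:ℕ) < h then M1 else M2) else 0 := by
      intro i; rw [hMv_eq i]; simp only [sv]; split_ifs <;> ring
    calc inn Mv (sv n k)
        = ∑ i : Fin n, (if (i:ℕ) < k then (if (i:ℕ) < h then M1 else M2) else 0) :=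
          Finset.sum_congr rfl fun i _ => e i
      _ = ∑ i ∈ Finset.range k, (if i < h then M1 else M2) :=
          (Fin.sum_univ_eq_sum_range
            (fun m => if m < k then (if m < h then M1 else M2) else 0) n).trans
            (sum_range_ite_lt _ k n hkn)
      _ = h * M1 + ((k - h : ℕ):ℝ) * M2 := sum_range_two M1 M2 h k hhk
  have hinn2 : inn mv (vv n (k+1)) = ((n - (k+1) : ℕ):ℝ) * m2 := by
    have e : ∀ i : Fin n, mv i * vv n (k+1) i = if (i:ℕ) < k + 1 then 0 else m2 := by
      intro i; rw [hmv_eq i]; simp only [vv]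
      split_ifs <;> first | ring1 | (exfalso; omega)
    calc inn mv (vv n (k+1))
        = ∑ i : Fin n, (if (i:ℕ) < k + 1 then 0 else m2) :=
          Finset.sum_congr rfl fun i _ => e i
      _ = ((n - (k+1) : ℕ):ℝ) * m2 :=
          (Fin.sum_univ_eq_sum_range (fun m => if m < k + 1 then (0:ℝ) else m2) n).trans
            (sum_range_ite_ge m2 (k+1) n)
  have θval : θ = a - (h * M1 + ((k-h:ℕ):ℝ) * M2) - ((n-(k+1):ℕ):ℝ) * m2 := by
    rw [hθ, hinn1, hinn2]
  have hθhigh : θ ≤ M2 := by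
    rcases lt_or_eq_of_le hkn with hlt | heq
    · have hc2 : ((n-(k+1):ℕ):ℝ) = (n:ℝ) - k - 1 := by
        rw [Nat.cast_sub (by omega)]; push_cast; ring
      rw [θval, hckh, hc2]
      linarith
    · have hz : (n - (k+1) : ℕ) = 0 := by omega
      rw [θval, hckh, hz, heq]
      simp only [Nat.cast_zero, zero_mul]
      linarith
  have hθlow : k < n → m2 ≤ θ := by
    intro hlt
    have hc2 : ((n-(k+1):ℕ):ℝ) = (n:ℝ) - k - 1 := by
      rw [Nat.cast_sub (by omega)]; push_cast; ring
    rw [θval, hckh, hc2]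
    linarith
  -- xstar as a function of the natural index
  set F : ℕ → ℝ := fun i => if i < h then M1 else if i < k then M2 else if i = k then θ else m2
    with hF
  have hxF : ∀ i : Fin n, xstar i = F (i:ℕ) := fun i => hxstar i
  -- total sum of xstar
  have hsum_star : ∑ i, xstar i = a := by
    have s1 : ∑ i, xstar i = ∑ i ∈ Finset.range n, F i := by
      rw [Finset.sum_congr rfl fun i _ => hxF i]
      exact Fin.sum_univ_eq_sum_range F n
    rcases lt_or_eq_of_le hkn with hlt | heq
    · rw [s1]
      simp only [hF]
      rw [sum_range_four M1 M2 θ m2 h k n hhk hlt, θval]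
      ring
    · rw [s1]
      have s2 : ∑ i ∈ Finset.range n, F i
          = ∑ i ∈ Finset.range n, (if i < h then M1 else M2) := by
        refine Finset.sum_congr rfl fun i hi => ?_
        have hi' : i < n := Finset.mem_range.mp hi
        simp only [hF]
        split_ifs with h1 h2 <;> first | rfl | (exfalso; omega)
      rw [s2, sum_range_two M1 M2 h n hhn, Nat.cast_sub hhn]
      rw [← heq] at haup hk1 ⊢
      linarith
  -- membership
  have hmem : xstar ∈ Sh n h a M1 M2 m1 m2 := by
    refine ⟨⟨?_, ?_, hsum_star⟩, ?_, ?_⟩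
    · intro i j hij
      rw [hxF i, hxF j]
      have hin : (i:ℕ) < n := i.isLt
      have hjn : (j:ℕ) < n := j.isLt
      have hij' : (i:ℕ) ≤ (j:ℕ) := hij
      simp only [hF]
      split_ifs <;>
        first
          | rfl
          | linarith
          | (exfalso; omega)
          | (exact le_trans hθhigh (by linarith))
          | (exact hθhigh)
          | (exact hθlow (by omega))
          | (exact le_trans (hθlow (by omega)) (by linarith))
    · intro i
      rw [hxF i]
      have hin : (i:ℕ) < n := i.isLt
      simp only [hF]
      split_ifs <;>
        first
          | linarith
          | (exact le_trans hm2 (hθlow (by omega)))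
    · intro i hi
      rw [hxF i]; simp only [hF]; rw [if_pos hi]
      exact ⟨le_of_lt hmM1, le_refl M1⟩
    · intro i hi
      rw [hxF i]
      have hin : (i:ℕ) < n := i.isLt
      simp only [hF]
      rw [if_neg (not_lt.mpr hi)]
      split_ifs with h1 h2
      · exact ⟨le_of_lt hmM2, le_refl M2⟩
      · exact ⟨hθlow (by omega), hθhigh⟩
      · exact ⟨le_refl m2, le_of_lt hmM2⟩
  refine ⟨hmem, ?_⟩
  rintro x ⟨⟨hxsort, hxpos, hxsum⟩, hxb1, hxb2⟩
  constructor
  · intro j hj1 hjn1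
    have hjn : j < n := by omega
    rcases le_or_gt j k with hjk | hkj
    · -- termwise comparison
      simp only [psum]
      apply Finset.sum_le_sum
      intro i _
      split_ifs with hij
      · rw [hxF i]
        simp only [hF]
        split_ifs with h1 h2 h3
        · exact (hxb1 i h1).2
        · exact (hxb2 i (not_lt.mp h1)).2
        · exfalso; omega
        · exfalso; omega
      · exact le_refl 0
    · -- j > k
      have hkltn : k < n := lt_trans hkj hjn
      have hstar : psum xstar j =
          h * M1 + ((k-h:ℕ):ℝ) * M2 + θ + ((j - (k+1) : ℕ):ℝ) * m2 := by
        calc psum xstar j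
            = ∑ i : Fin n, (if (i:ℕ) < j then F (i:ℕ) else 0) :=
              Finset.sum_congr rfl fun i _ => by rw [hxF i]
          _ = ∑ i ∈ Finset.range j, F i :=
              (Fin.sum_univ_eq_sum_range (fun m => if m < j then F m else 0) n).trans
                (sum_range_ite_lt F j n (le_of_lt hjn))
          _ = h * M1 + ((k-h:ℕ):ℝ) * M2 + θ + ((j - (k+1) : ℕ):ℝ) * m2 := by
              simp only [hF]
              exact sum_range_four M1 M2 θ m2 h k j hhk hkj
      have htail : ((n - j : ℕ):ℝ) * m2 ≤ ∑ i : Fin n, (if (i:ℕ) < j then 0 else x i) := by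
        have h1 : ((n - j : ℕ):ℝ) * m2 = ∑ i : Fin n, (if (i:ℕ) < j then 0 else m2) :=
          ((Fin.sum_univ_eq_sum_range (fun m => if m < j then (0:ℝ) else m2) n).trans
            (sum_range_ite_ge m2 j n)).symm
        rw [h1]
        apply Finset.sum_le_sum
        intro i _
        split_ifs with hij
        · exact le_refl 0
        · exact (hxb2 i (by omega)).1
      have hsplit : psum x j + ∑ i : Fin n, (if (i:ℕ) < j then 0 else x i) = a := by
        simp only [psum]
        rw [← Finset.sum_add_distrib]
        rw [Finset.sum_congr rfl fun i _ => by split_ifs <;> ring]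
        exact hxsum
      have hc2 : ((n-(k+1):ℕ):ℝ) = (n:ℝ) - k - 1 := by
        rw [Nat.cast_sub (by omega)]; push_cast; ring
      have hc3 : ((j-(k+1):ℕ):ℝ) = (j:ℝ) - k - 1 := by
        rw [Nat.cast_sub (by omega)]; push_cast; ring
      have hc4 : ((n-j:ℕ):ℝ) = (n:ℝ) - j := Nat.cast_sub (le_of_lt hjn)
      have θv' : θ = a - (h*M1 + ((k:ℝ)-h)*M2) - ((n:ℝ)-k-1)*m2 := by
        rw [θval, hckh, hc2]
      rw [hc4] at htail
      rw [hstar, hckh, hc3]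
      linarith
  · rw [hxsum, hsum_star]
end
end

section
/- Let 1 ≤ h ≤ n and 0 < α ≤ a/h. Then the maximal element with respect to the majorization order of the set S_a^2 = Σ_a ∩ {x ∈ ℝ^n : x_i ≥ α for i = 1,...,h} is x*(S_a^2) = (a − hα) e^1 + α s^h, i.e. the vector whose first component is a − (h−1)α, whose components 2 through h equal α, and whose remaining components are 0. -/
open Finset

noncomputable section

/-- `S_a^2 = Σ_a ∩ {x : x_i ≥ α, i = 1,...,h}`. -/
def S2 (n h : ℕ) (a α : ℝ) : Set (Fin n → ℝ) :=
  SigmaSet n a ∩ {x | ∀ i : Fin n, (i : ℕ) < h → α ≤ x i}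

lemma sum_const_Ico' (n k h : ℕ) (hhn : h ≤ n) (c : ℝ) :
    ∑ i : Fin n, (if k ≤ (i:ℕ) ∧ (i:ℕ) < h then c else 0) = ((h - k : ℕ) : ℝ) * c := by
  rw [Fin.sum_univ_eq_sum_range (fun i => if k ≤ i ∧ i < h then c else 0)]
  have h1 : ∀ i ∈ Finset.range n, (if k ≤ i ∧ i < h then c else 0)
      = if i ∈ Finset.Ico k h then c else 0 := by
    intro i _; simp [Finset.mem_Ico]
  rw [Finset.sum_congr rfl h1, Finset.sum_ite_mem,
      Finset.inter_eq_right.mpr (fun i hi => Finset.mem_range.mpr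
        (lt_of_lt_of_le (Finset.mem_Ico.mp hi).2 hhn)),
      Finset.sum_const, Nat.card_Ico, nsmul_eq_mul]

/-- The maximal element of `S_a^2` is `(a - hα) e^1 + α s^h`. -/
theorem maximal_element_of_S2 (n h : ℕ) (hh : 1 ≤ h) (hhn : h ≤ n)
    (a α : ℝ) (ha : 0 < a) (hα : 0 < α) (hαa : α ≤ a / h)
    (xstar : Fin n → ℝ)
    (hxstar : xstar = fun i => (a - h * α) * ev n 1 i + α * sv n h i) :
    xstar ∈ S2 n h a α ∧ ∀ x ∈ S2 n h a α, Maj x xstar := by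
  have hn1 : 1 ≤ n := le_trans hh hhn
  have hhpos : (0:ℝ) < (h:ℕ) := by exact_mod_cast hh
  have hkey : (h:ℝ) * α ≤ a := by
    rw [le_div_iff₀ hhpos] at hαa; linarith [hαa]
  have hcoef : 0 ≤ a - (h:ℝ) * α := by linarith
  -- sum of xstar
  have hsumxstar : ∑ i, xstar i = a := by
    rw [hxstar]
    have heq : ∀ i : Fin n, ((a - (h:ℝ) * α) * ev n 1 i + α * sv n h i)
        = (if 0 ≤ (i:ℕ) ∧ (i:ℕ) < 1 then (a - (h:ℝ)*α) else 0)
          + (if 0 ≤ (i:ℕ) ∧ (i:ℕ) < h then α else 0) := by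
      intro i; simp only [ev, sv]
      split_ifs <;> first | ring1 | (exfalso; omega)
    rw [Finset.sum_congr rfl (fun i _ => heq i), Finset.sum_add_distrib,
        sum_const_Ico' n 0 1 hn1, sum_const_Ico' n 0 h hhn, Nat.sub_zero, Nat.sub_zero]
    ring
  -- psum of xstar
  have hps : ∀ k : ℕ, 1 ≤ k → psum xstar k = (a - (h:ℝ) * α) + (min k h : ℕ) * α := by
    intro k hk1
    unfold psum
    rw [hxstar]
    have heq : ∀ i : Fin n, (if (i:ℕ) < k then ((a - (h:ℝ) * α) * ev n 1 i + α * sv n h i) else 0)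
        = (if 0 ≤ (i:ℕ) ∧ (i:ℕ) < 1 then (a - (h:ℝ)*α) else 0)
          + (if 0 ≤ (i:ℕ) ∧ (i:ℕ) < min k h then α else 0) := by
      intro i; simp only [ev, sv]
      split_ifs <;> first | ring1 | (exfalso; omega)
    rw [Finset.sum_congr rfl (fun i _ => heq i), Finset.sum_add_distrib,
        sum_const_Ico' n 0 1 hn1, sum_const_Ico' n 0 (min k h) (le_trans (min_le_right k h) hhn),
        Nat.sub_zero, Nat.sub_zero]
    ring
  constructor
  · refine ⟨⟨?_, ?_, hsumxstar⟩, ?_⟩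
    · intro i j hij
      have hij' : (i:ℕ) ≤ (j:ℕ) := hij
      rw [hxstar]; simp only [ev, sv]
      split_ifs <;> first | linarith | (exfalso; omega)
    · intro i
      rw [hxstar]; simp only [ev, sv]
      split_ifs <;> linarith
    · intro i hi
      rw [hxstar]; simp only [ev, sv, Set.mem_setOf_eq]
      split_ifs <;> first | linarith | (exfalso; omega)
  · rintro x ⟨⟨hmono, hnn, hsum⟩, hcons⟩
    constructor
    · intro k hk1 hk2
      rw [hps k hk1]
      have hsplit : psum x k + (∑ i : Fin n, if (i:ℕ) < k then 0 else x i) = a := by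
        unfold psum
        rw [← Finset.sum_add_distrib, ← hsum]
        apply Finset.sum_congr rfl
        intro i _; split_ifs <;> ring
      have htail : ((h - min k h : ℕ):ℝ) * α ≤ ∑ i : Fin n, if (i:ℕ) < k then 0 else x i := by
        rw [← sum_const_Ico' n (min k h) h hhn α]
        apply Finset.sum_le_sum
        intro i _
        by_cases h2 : (i:ℕ) < k
        · have h1 : ¬(min k h ≤ (i:ℕ) ∧ (i:ℕ) < h) := by omega
          simp only [h1, h2, if_true, if_false, if_neg, le_refl]
        · by_cases h1 : min k h ≤ (i:ℕ) ∧ (i:ℕ) < h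
          · simp only [h1, h2, if_true, if_false]
            exact hcons i h1.2
          · simp only [h1, h2, if_false]
            exact hnn i
      have hc : ((h - min k h : ℕ):ℝ) = (h:ℝ) - (min k h : ℕ) := by
        rw [Nat.cast_sub (min_le_right k h)]
      rw [hc] at htail
      linarith
    · rw [hsum, hsumxstar]
end
end

section
/- Let a > 0, let m = (m_1,...,m_n) and M = (M_1,...,M_n) be vectors arranged in nonincreasing order with 0 ≤ m_i ≤ M_i for all i, and ⟨m,s^n⟩ ≤ a ≤ ⟨M,s^n⟩. Let k ≥ 0 and d ≥ 0 be the smallest integers such that k + d < n and m_{k+1} ≤ ρ ≤ M_{n−d}, where ρ = (a − ⟨m, s^k⟩ − ⟨M, v^{n−d}⟩)/(n − k − d). Then the vector x_* = m∘s^k + ρ(s^{n−d} − s^k) + M∘v^{n−d} belongs to S_a and x_* is majorized by every x ∈ S_a, i.e. x_* ⊴ x for all x ∈ S_a. -/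
open Finset
set_option maxHeartbeats 1000000

noncomputable section

/-- Condition on `(k, d)` in Theorem 6: `k + d < n` and `m_{k+1} ≤ ρ ≤ M_{n-d}` where
`ρ = (a - ⟨m, s^k⟩ - ⟨M, v^{n-d}⟩)/(n - k - d)`. -/
def MinCond (n : ℕ) (a : ℝ) (m M : Fin n → ℝ) (k d : ℕ) : Prop :=
  k + d < n ∧
    (∀ i : Fin n, (i : ℕ) = k →
      m i ≤ (a - inn m (sv n k) - inn M (vv n (n - d))) / ((n : ℝ) - k - d)) ∧
    (∀ i : Fin n, (i : ℕ) = n - d - 1 →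
      (a - inn m (sv n k) - inn M (vv n (n - d))) / ((n : ℝ) - k - d) ≤ M i)


def tailsum {n : ℕ} (x : Fin n → ℝ) (k : ℕ) : ℝ := ∑ i : Fin n, if (i : ℕ) < k then 0 else x i

lemma psum_zero {n : ℕ} (f : Fin n → ℝ) : psum f 0 = 0 := by simp [psum]

lemma sum_ite_coe_eq {n : ℕ} (f : Fin n → ℝ) (t : ℕ) (ht : t < n) :
    (∑ i : Fin n, if (i : ℕ) = t then f i else 0) = f ⟨t, ht⟩ := by
  rw [Finset.sum_eq_single (⟨t, ht⟩ : Fin n)]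
  · simp
  · intro b _ hb; rw [if_neg]; simpa [Fin.ext_iff] using hb
  · simp

lemma psum_step {n : ℕ} (f : Fin n → ℝ) (t : ℕ) (ht : t < n) :
    psum f (t + 1) = psum f t + f ⟨t, ht⟩ := by
  unfold psum
  rw [← sum_ite_coe_eq f t ht, ← Finset.sum_add_distrib]
  apply Finset.sum_congr rfl
  intro i _
  by_cases h1 : (i : ℕ) < t
  · rw [if_pos (by omega : (i:ℕ) < t + 1), if_pos h1, if_neg (by omega)]; ring
  · by_cases h2 : (i : ℕ) = t
    · rw [if_pos (by omega : (i:ℕ) < t + 1), if_neg h1, if_pos h2]; ring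
    · rw [if_neg (by omega : ¬ (i:ℕ) < t + 1), if_neg h1, if_neg h2]; ring

lemma tailsum_step {n : ℕ} (f : Fin n → ℝ) (t : ℕ) (ht : t < n) :
    tailsum f t = f ⟨t, ht⟩ + tailsum f (t + 1) := by
  unfold tailsum
  rw [← sum_ite_coe_eq f t ht, ← Finset.sum_add_distrib]
  apply Finset.sum_congr rfl
  intro i _
  by_cases h1 : (i : ℕ) < t
  · rw [if_pos h1, if_neg (by omega), if_pos (by omega : (i:ℕ) < t + 1)]; ring
  · by_cases h2 : (i : ℕ) = t
    · rw [if_neg h1, if_pos h2, if_pos (by omega : (i:ℕ) < t + 1)]; ring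
    · rw [if_neg h1, if_neg h2, if_neg (by omega : ¬ (i:ℕ) < t + 1)]; ring

lemma psum_add_tailsum {n : ℕ} (f : Fin n → ℝ) (t : ℕ) :
    psum f t + tailsum f t = ∑ i, f i := by
  unfold psum tailsum
  rw [← Finset.sum_add_distrib]
  apply Finset.sum_congr rfl
  intro i _; split_ifs <;> ring

lemma psum_const_one {n : ℕ} (t : ℕ) (ht : t ≤ n) :
    psum (fun _ : Fin n => (1 : ℝ)) t = t := by
  induction t with
  | zero => simp [psum_zero]
  | succ s ih =>
    rw [psum_step _ s (by omega), ih (by omega)]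
    push_cast; ring

/-- The vector `x_* = m∘s^k + ρ(s^{n-d} - s^k) + M∘v^{n-d}` belongs to `S_a` and is
majorized by every element of `S_a`. -/
theorem minimal_element_of_Sa (n : ℕ) (a : ℝ) (ha : 0 < a) (m M : Fin n → ℝ)
    (hm_dec : ∀ i j : Fin n, i ≤ j → m j ≤ m i)
    (hM_dec : ∀ i j : Fin n, i ≤ j → M j ≤ M i)
    (hmM : ∀ i, 0 ≤ m i ∧ m i ≤ M i)
    (hma : inn m (sv n n) ≤ a) (haM : a ≤ inn M (sv n n))
    (k d : ℕ) (hkd : MinCond n a m M k d)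
    (hkdmin : ∀ k' d' : ℕ, MinCond n a m M k' d' → k ≤ k' ∧ d ≤ d')
    (ρ : ℝ) (hρ : ρ = (a - inn m (sv n k) - inn M (vv n (n - d))) / ((n : ℝ) - k - d))
    (xmin : Fin n → ℝ)
    (hxmin : xmin = fun i =>
      had m (sv n k) i + ρ * (sv n (n - d) i - sv n k i) + had M (vv n (n - d)) i)
    (Sa : Set (Fin n → ℝ))
    (hSa : Sa = SigmaSet n a ∩ {x | ∀ i, m i ≤ x i ∧ x i ≤ M i}) :
    xmin ∈ Sa ∧ ∀ x ∈ Sa, Maj xmin x := by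

  have hkdn : k + d < n := hkd.1
  have hn : 0 < n := by omega
  have hkn : k < n - d := by omega
  have hkltn : k < n := by omega
  have hnd1 : n - d - 1 < n := by omega
  have hdn : d < n := by omega
  have hinn : ∀ (f : Fin n → ℝ) (t : ℕ), inn f (sv n t) = psum f t := by
    intro f t
    unfold inn sv psum
    apply Finset.sum_congr rfl
    intro i _; split_ifs <;> ring
  have hvv : ∀ (f : Fin n → ℝ) (t : ℕ), inn f (vv n t) = tailsum f t := by
    intro f t
    unfold inn vv tailsum
    apply Finset.sum_congr rfl
    intro i _; split_ifs <;> ring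
  have hD : (0:ℝ) < (n:ℝ) - k - d := by
    have h : ((k + d : ℕ) : ℝ) < (n : ℝ) := Nat.cast_lt.mpr hkdn
    push_cast at h; linarith
  have hρsum : ((n:ℝ) - k - d) * ρ = a - psum m k - tailsum M (n - d) := by
    rw [hρ, hinn, hvv]
    field_simp
  have hmρ : m ⟨k, hkltn⟩ ≤ ρ := by
    rw [hρ]; exact hkd.2.1 ⟨k, hkltn⟩ rfl
  have hρM : ρ ≤ M ⟨n - d - 1, hnd1⟩ := by
    rw [hρ]; exact hkd.2.2 ⟨n - d - 1, hnd1⟩ rfl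
  -- minimality consequence 1 : ρ ≤ m (k-1) when k ≥ 1
  have hmk1 : ∀ hk1 : 1 ≤ k, ρ ≤ m ⟨k - 1, by omega⟩ := by
    intro hk1
    by_contra hcon
    push_neg at hcon
    have hA' : psum m k = psum m (k - 1) + m ⟨k - 1, by omega⟩ := by
      have h := psum_step m (k - 1) (by omega)
      rw [show k - 1 + 1 = k by omega] at h
      exact h
    have hcast : ((k - 1 : ℕ) : ℝ) = (k : ℝ) - 1 := by
      push_cast [hk1]; ring
    have hMC : MinCond n a m M (k - 1) d := by
      refine ⟨by omega, ?_, ?_⟩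
      · intro i hi
        have hieq : i = (⟨k - 1, by omega⟩ : Fin n) := Fin.ext hi
        rw [hieq, hinn, hvv, hcast]
        rw [le_div_iff₀ (by linarith)]
        linarith [hρsum, hA', mul_le_mul_of_nonneg_left hcon.le hD.le]
      · intro i hi
        have hieq : i = (⟨n - d - 1, hnd1⟩ : Fin n) := Fin.ext hi
        rw [hieq, hinn, hvv, hcast]
        rw [div_le_iff₀ (by linarith)]
        linarith [hρsum, hA', mul_le_mul_of_nonneg_left hρM hD.le,
          mul_le_mul_of_nonneg_left hcon.le hD.le]
    have := (hkdmin (k - 1) d hMC).1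
    omega
  -- minimality consequence 2 : M (n-d) ≤ ρ when d ≥ 1
  have hMd1 : ∀ hd1 : 1 ≤ d, M ⟨n - d, by omega⟩ ≤ ρ := by
    intro hd1
    by_contra hcon
    push_neg at hcon
    have hB' : tailsum M (n - d) = M ⟨n - d, by omega⟩ + tailsum M (n - d + 1) := by
      exact tailsum_step M (n - d) (by omega)
    have hcast : ((d - 1 : ℕ) : ℝ) = (d : ℝ) - 1 := by
      push_cast [hd1]; ring
    have hidx : n - (d - 1) = n - d + 1 := by omega
    have hMC : MinCond n a m M k (d - 1) := by
      refine ⟨by omega, ?_, ?_⟩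
      · intro i hi
        have hieq : i = (⟨k, hkltn⟩ : Fin n) := Fin.ext hi
        rw [hieq, hinn, hvv, hcast]
        simp only [hidx]
        rw [le_div_iff₀ (by linarith)]
        linarith [hρsum, hB', hmρ, mul_le_mul_of_nonneg_left hmρ hD.le]
      · intro i hi
        have hieq : i = (⟨n - d, by omega⟩ : Fin n) := by
          apply Fin.ext
          show (i:ℕ) = n - d
          omega
        rw [hieq, hinn, hvv, hcast]
        simp only [hidx]
        rw [div_le_iff₀ (by linarith)]
        linarith [hρsum, hB', mul_le_mul_of_nonneg_left hcon.le hD.le]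
    have := (hkdmin k (d - 1) hMC).2
    omega
  -- closed form of xmin
  have hx : ∀ i : Fin n, xmin i = if (i:ℕ) < k then m i else if (i:ℕ) < n - d then ρ else M i := by
    intro i
    rw [hxmin]
    simp only [had, sv, vv]
    split_ifs <;> first | (exfalso; omega) | ring
  -- bounds m ≤ xmin ≤ M
  have hbound : ∀ i : Fin n, m i ≤ xmin i ∧ xmin i ≤ M i := by
    intro i
    rw [hx i]
    by_cases h1 : (i:ℕ) < k
    · rw [if_pos h1]; exact ⟨le_refl _, (hmM i).2⟩
    · by_cases h2 : (i:ℕ) < n - d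
      · rw [if_neg h1, if_pos h2]
        constructor
        · exact le_trans (hm_dec ⟨k, hkltn⟩ i (by simp [Fin.le_def]; omega)) hmρ
        · exact le_trans hρM (hM_dec i ⟨n - d - 1, hnd1⟩ (by simp [Fin.le_def]; omega))
      · rw [if_neg h1, if_neg h2]; exact ⟨(hmM i).2, le_refl _⟩
  -- xmin is nonincreasing
  have hdec : ∀ i j : Fin n, i ≤ j → xmin j ≤ xmin i := by
    intro i j hij
    have hij' : (i:ℕ) ≤ (j:ℕ) := hij
    rw [hx i, hx j]
    by_cases hjk : (j:ℕ) < k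
    · rw [if_pos hjk, if_pos (by omega : (i:ℕ) < k)]
      exact hm_dec i j hij
    · by_cases hjnd : (j:ℕ) < n - d
      · rw [if_neg hjk, if_pos hjnd]
        by_cases hik : (i:ℕ) < k
        · rw [if_pos hik]
          exact le_trans (hmk1 (by omega)) (hm_dec i ⟨k - 1, by omega⟩ (by simp [Fin.le_def]; omega))
        · rw [if_neg hik, if_pos (by omega : (i:ℕ) < n - d)]
      · rw [if_neg hjk, if_neg hjnd]
        have hd1 : 1 ≤ d := by have := j.isLt; omega
        have hMj : M j ≤ M ⟨n - d, by omega⟩ :=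
          hM_dec ⟨n - d, by omega⟩ j (by simp [Fin.le_def]; omega)
        by_cases hik : (i:ℕ) < k
        · rw [if_pos hik]
          have h3 := hmk1 (by omega)
          have h4 := hm_dec i ⟨k - 1, by omega⟩ (by simp [Fin.le_def]; omega)
          have h5 := hMd1 hd1
          linarith
        · by_cases hind : (i:ℕ) < n - d
          · rw [if_neg hik, if_pos hind]
            exact le_trans hMj (hMd1 hd1)
          · rw [if_neg hik, if_neg hind]
            exact hM_dec i j hij
  -- sum of xmin
  have hsum : ∑ i, xmin i = a := by
    have hpt : ∀ i : Fin n, xmin i =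
        (if (i:ℕ) < k then m i else 0)
        + ρ * ((if (i:ℕ) < n - d then (1:ℝ) else 0) - (if (i:ℕ) < k then (1:ℝ) else 0))
        + (if (i:ℕ) < n - d then 0 else M i) := by
      intro i; rw [hx i]; split_ifs <;> first | (exfalso; omega) | ring
    rw [Finset.sum_congr rfl (fun i _ => hpt i)]
    rw [Finset.sum_add_distrib, Finset.sum_add_distrib, ← Finset.mul_sum, Finset.sum_sub_distrib]
    have c1 : (∑ i : Fin n, if (i:ℕ) < n - d then (1:ℝ) else 0) = ((n - d : ℕ) : ℝ) := by
      simpa [psum] using psum_const_one (n := n) (n - d) (by omega)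
    have c2 : (∑ i : Fin n, if (i:ℕ) < k then (1:ℝ) else 0) = ((k : ℕ) : ℝ) := by
      simpa [psum] using psum_const_one (n := n) k (by omega)
    have c3 : (∑ i : Fin n, if (i:ℕ) < k then m i else 0) = psum m k := rfl
    have c4 : (∑ i : Fin n, if (i:ℕ) < n - d then 0 else M i) = tailsum M (n - d) := rfl
    rw [c1, c2, c3, c4, Nat.cast_sub (by omega : d ≤ n)]
    linear_combination hρsum
  have hρ0 : 0 ≤ ρ := le_trans (hmM ⟨k, hkltn⟩).1 hmρ
  have hmem : xmin ∈ Sa := by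
    rw [hSa]
    refine ⟨⟨hdec, fun i => le_trans (hmM i).1 (hbound i).1, hsum⟩, fun i => hbound i⟩
  refine ⟨hmem, ?_⟩
  intro x hxS
  rw [hSa] at hxS
  obtain ⟨⟨hxdec, hx0, hxsum⟩, hxb⟩ := hxS
  constructor
  · intro t ht1 htn
    have htn' : t < n := by omega
    by_cases h1 : t ≤ k
    · unfold psum
      apply Finset.sum_le_sum
      intro i _
      by_cases hit : (i:ℕ) < t
      · rw [if_pos hit, if_pos hit, hx i, if_pos (by omega)]
        exact (hxb i).1
      · rw [if_neg hit, if_neg hit]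
    · by_cases h2 : t ≤ n - d
      · have ht1' : t - 1 < n := by omega
        by_cases hxp : ρ ≤ x ⟨t - 1, ht1'⟩
        · unfold psum
          apply Finset.sum_le_sum
          intro i _
          by_cases hit : (i:ℕ) < t
          · rw [if_pos hit, if_pos hit, hx i]
            by_cases hik : (i:ℕ) < k
            · rw [if_pos hik]; exact (hxb i).1
            · rw [if_neg hik, if_pos (by omega)]
              exact le_trans hxp (hxdec i ⟨t - 1, ht1'⟩ (by simp [Fin.le_def]; omega))
          · rw [if_neg hit, if_neg hit]
        · push_neg at hxp
          have h3 : tailsum x t ≤ tailsum xmin t := by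
            unfold tailsum
            apply Finset.sum_le_sum
            intro i _
            by_cases hit : (i:ℕ) < t
            · rw [if_pos hit, if_pos hit]
            · rw [if_neg hit, if_neg hit, hx i, if_neg (by omega : ¬ (i:ℕ) < k)]
              by_cases hind : (i:ℕ) < n - d
              · rw [if_pos hind]
                exact le_trans (hxdec ⟨t - 1, ht1'⟩ i (by simp [Fin.le_def]; omega)) hxp.le
              · rw [if_neg hind]; exact (hxb i).2
          have e1 := psum_add_tailsum xmin t
          have e2 := psum_add_tailsum x t
          rw [hsum] at e1
          rw [hxsum] at e2
          linarith
      · have h3 : tailsum x t ≤ tailsum xmin t := by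
          unfold tailsum
          apply Finset.sum_le_sum
          intro i _
          by_cases hit : (i:ℕ) < t
          · rw [if_pos hit, if_pos hit]
          · rw [if_neg hit, if_neg hit, hx i, if_neg (by omega : ¬ (i:ℕ) < k),
                if_neg (by omega : ¬ (i:ℕ) < n - d)]
            exact (hxb i).2
        have e1 := psum_add_tailsum xmin t
        have e2 := psum_add_tailsum x t
        rw [hsum] at e1
        rw [hxsum] at e2
        linarith
  · rw [hsum, hxsum]
end
end

section
/- Let a > 0, let m = (m_1,...,m_n) and M = (M_1,...,M_n) be vectors arranged in nonincreasing order with 0 ≤ m_i ≤ M_i for all i and ⟨m,s^n⟩ ≤ a ≤ ⟨M,s^n⟩, and assume additionally that the intervals are disjoint: M_{i+1} < m_i for i = 1,...,n−1. Let k ≥ 0 be the smallest integer such that ⟨m, s^{k+1}⟩ + ⟨M, v^{k+1}⟩ ≤ a < ⟨m, s^k⟩ + ⟨M, v^k⟩, and set ρ = a − ⟨m, s^k⟩ − ⟨M, v^{k+1}⟩. Then the minimal element of S_a with respect to the majorization order is x_*(S_a) = m∘s^k + ρ e^{k+1} + M∘v^{k+1}. -/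
open Finset

noncomputable section

/-- Corollary (disjoint intervals): the minimal element of `S_a` is
`m∘s^k + ρ e^{k+1} + M∘v^{k+1}`. -/
theorem minimal_element_of_Sa_disjoint (n : ℕ) (a : ℝ) (ha : 0 < a) (m M : Fin n → ℝ)
    (hm_dec : ∀ i j : Fin n, i ≤ j → m j ≤ m i)
    (hM_dec : ∀ i j : Fin n, i ≤ j → M j ≤ M i)
    (hmM : ∀ i, 0 ≤ m i ∧ m i ≤ M i)
    (hma : inn m (sv n n) ≤ a) (haM : a ≤ inn M (sv n n))
    (hdisj : ∀ i j : Fin n, (j : ℕ) = (i : ℕ) + 1 → M j < m i)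
    (k : ℕ)
    (hk : inn m (sv n (k + 1)) + inn M (vv n (k + 1)) ≤ a ∧
          a < inn m (sv n k) + inn M (vv n k))
    (hkmin : ∀ j : ℕ,
      (inn m (sv n (j + 1)) + inn M (vv n (j + 1)) ≤ a ∧
        a < inn m (sv n j) + inn M (vv n j)) → k ≤ j)
    (ρ : ℝ) (hρ : ρ = a - inn m (sv n k) - inn M (vv n (k + 1)))
    (xmin : Fin n → ℝ)
    (hxmin : xmin = fun i => had m (sv n k) i + ρ * ev n (k + 1) i + had M (vv n (k + 1)) i)
    (Sa : Set (Fin n → ℝ))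
    (hSa : Sa = SigmaSet n a ∩ {x | ∀ i, m i ≤ x i ∧ x i ≤ M i}) :
    xmin ∈ Sa ∧ ∀ x ∈ Sa, Maj xmin x := by
  subst hxmin hSa
  -- basic conversions
  have hinn_sv : ∀ (x : Fin n → ℝ) (j : ℕ), inn x (sv n j) = psum x j := by
    intro x j
    unfold inn sv psum
    apply Finset.sum_congr rfl
    intro i _
    split <;> simp
  have hinn_vv : ∀ (x : Fin n → ℝ) (j : ℕ), inn x (vv n j) = (∑ i, x i) - psum x j := by
    intro x j
    unfold inn vv psum
    rw [eq_sub_iff_add_eq, ← Finset.sum_add_distrib]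
    apply Finset.sum_congr rfl
    intro i _
    split <;> simp
  have hpn : ∀ x : Fin n → ℝ, psum x n = ∑ i, x i := by
    intro x
    unfold psum
    apply Finset.sum_congr rfl
    intro i _
    simp [i.isLt]
  have hkn : k < n := by
    by_contra h
    push_neg at h
    have h1 : inn m (sv n k) = inn m (sv n n) := by
      unfold inn sv
      apply Finset.sum_congr rfl
      intro i _
      simp [i.isLt, lt_of_lt_of_le i.isLt h]
    have h2 : inn M (vv n k) = 0 := by
      unfold inn vv
      apply Finset.sum_eq_zero
      intro i _
      simp [lt_of_lt_of_le i.isLt h]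
    have := hk.2
    rw [h1, h2] at this
    linarith
  have hpsucc : ∀ x : Fin n → ℝ, psum x (k+1) = psum x k + x ⟨k, hkn⟩ := by
    intro x
    have hx : x ⟨k, hkn⟩ = ∑ i : Fin n, if i = ⟨k, hkn⟩ then x i else 0 := by
      rw [Finset.sum_ite_eq' Finset.univ (⟨k, hkn⟩ : Fin n) x]
      simp
    unfold psum
    rw [hx, ← Finset.sum_add_distrib]
    apply Finset.sum_congr rfl
    intro i _
    by_cases h1 : (i:ℕ) < k
    · have hne : i ≠ ⟨k, hkn⟩ := by
        simp only [ne_eq, Fin.ext_iff]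
        omega
      have h3 : (i:ℕ) < k + 1 := by omega
      simp [h1, h3, hne]
    · by_cases h2 : (i:ℕ) = k
      · have heq : i = ⟨k, hkn⟩ := Fin.ext h2
        have h3 : (i:ℕ) < k + 1 := by omega
        simp [h1, h3, heq]
      · have hne : i ≠ ⟨k, hkn⟩ := by
          simp only [ne_eq, Fin.ext_iff]
          omega
        have h3 : ¬ (i:ℕ) < k + 1 := by omega
        simp [h1, h3, hne]
  -- rewrite hk and hρ in terms of psum
  rw [hinn_sv, hinn_vv] at hρ
  obtain ⟨hk1, hk2⟩ := hk
  rw [hinn_sv, hinn_vv] at hk1 hk2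
  rw [hinn_sv] at hma
  -- bounds on ρ
  have hρm : m ⟨k, hkn⟩ ≤ ρ := by
    have := hpsucc m
    linarith
  have hρM : ρ < M ⟨k, hkn⟩ := by
    have := hpsucc M
    linarith
  -- closed form for xmin
  have hfun : (fun i : Fin n => had m (sv n k) i + ρ * ev n (k + 1) i + had M (vv n (k + 1)) i)
      = fun i : Fin n => if (i:ℕ) < k then m i else if (i:ℕ) = k then ρ else M i := by
    funext i
    unfold had sv ev vv
    by_cases h1 : (i:ℕ) < k
    · have h2 : ¬ (i:ℕ) + 1 = k + 1 := by omega
      have h3 : (i:ℕ) < k + 1 := by omega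
      simp [h1, h2, h3, show ¬ (i:ℕ) = k by omega]
    · by_cases h2 : (i:ℕ) = k
      · have h4 : (i:ℕ) + 1 = k + 1 := by omega
        have h3 : (i:ℕ) < k + 1 := by omega
        simp [h1, h2, h3, h4]
      · have h3 : ¬ (i:ℕ) < k + 1 := by omega
        have h4 : ¬ (i:ℕ) + 1 = k + 1 := by omega
        simp [h1, h2, h3, h4]
  rw [hfun]
  set y : Fin n → ℝ := fun i => if (i:ℕ) < k then m i else if (i:ℕ) = k then ρ else M i with hy
  have hylt : ∀ i : Fin n, (i:ℕ) < k → y i = m i := by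
    intro i h
    simp [hy, h]
  have hyeq : y ⟨k, hkn⟩ = ρ := by
    simp [hy]
  have hygt : ∀ i : Fin n, k < (i:ℕ) → y i = M i := by
    intro i h
    have h1 : ¬ (i:ℕ) < k := by omega
    have h2 : ¬ (i:ℕ) = k := by omega
    simp [hy, h1, h2]
  -- ρ is below m i for i < k, above M j for j > k
  have hρ_lt : ∀ i : Fin n, (i:ℕ) < k → ρ ≤ m i := by
    intro i h
    have hk1n : k - 1 < n := by omega
    have hd := hdisj ⟨k-1, hk1n⟩ ⟨k, hkn⟩ (by simp; omega)
    have hmi : m ⟨k-1, hk1n⟩ ≤ m i := hm_dec i ⟨k-1, hk1n⟩ (by simp [Fin.le_def]; omega)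
    linarith
  have hρ_gt : ∀ j : Fin n, k < (j:ℕ) → M j ≤ ρ := by
    intro j h
    have hk1n : k + 1 < n := by omega
    have hd := hdisj ⟨k, hkn⟩ ⟨k+1, hk1n⟩ (by simp)
    have hMj : M j ≤ M ⟨k+1, hk1n⟩ := hM_dec ⟨k+1, hk1n⟩ j (by simp [Fin.le_def]; omega)
    linarith
  -- sum of y equals a
  have hysum : ∑ i, y i = a := by
    have hsplit : ∀ i : Fin n, y i =
        (if (i:ℕ) < k then m i else 0) + (if i = (⟨k, hkn⟩ : Fin n) then ρ else 0)
          + (M i - (if (i:ℕ) < k + 1 then M i else 0)) := by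
      intro i
      by_cases h1 : (i:ℕ) < k
      · have h3 : (i:ℕ) < k + 1 := by omega
        have hne : i ≠ ⟨k, hkn⟩ := by
          simp only [ne_eq, Fin.ext_iff]; omega
        simp [hy, h1, h3, hne]
      · by_cases h2 : (i:ℕ) = k
        · have heq : i = ⟨k, hkn⟩ := Fin.ext h2
          have h3 : (i:ℕ) < k + 1 := by omega
          simp [hy, h1, h2, h3, heq]
        · have hne : i ≠ ⟨k, hkn⟩ := by
            simp only [ne_eq, Fin.ext_iff]; omega
          have h3 : ¬ (i:ℕ) < k + 1 := by omega
          simp [hy, h1, h2, h3, hne]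
    calc ∑ i, y i = ∑ i : Fin n, ((if (i:ℕ) < k then m i else 0)
            + (if i = (⟨k, hkn⟩ : Fin n) then ρ else 0)
            + (M i - (if (i:ℕ) < k + 1 then M i else 0))) :=
          Finset.sum_congr rfl (fun i _ => hsplit i)
      _ = psum m k + ρ + ((∑ i, M i) - psum M (k+1)) := by
          rw [Finset.sum_add_distrib, Finset.sum_add_distrib, Finset.sum_sub_distrib,
            Finset.sum_ite_eq' Finset.univ (⟨k, hkn⟩ : Fin n)]
          simp [psum]
      _ = a := by linarith
  -- membership
  have hmem : y ∈ SigmaSet n a ∩ {x | ∀ i, m i ≤ x i ∧ x i ≤ M i} := by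
    constructor
    · refine ⟨?_, ?_, hysum⟩
      · intro i j hij
        by_cases hi1 : (i:ℕ) < k
        · rw [hylt i hi1]
          by_cases hj1 : (j:ℕ) < k
          · rw [hylt j hj1]; exact hm_dec i j hij
          · by_cases hj2 : (j:ℕ) = k
            · have : j = ⟨k, hkn⟩ := Fin.ext hj2
              rw [this, hyeq]; exact hρ_lt i hi1
            · have : k < (j:ℕ) := by omega
              rw [hygt j this]
              exact le_trans (hρ_gt j this) (hρ_lt i hi1)
        · by_cases hi2 : (i:ℕ) = k
          · have hieq : i = ⟨k, hkn⟩ := Fin.ext hi2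
            by_cases hj2 : (j:ℕ) = k
            · have : j = ⟨k, hkn⟩ := Fin.ext hj2
              rw [this, hieq]
            · have hjk : k < (j:ℕ) := by
                have := hij
                rw [Fin.le_def] at this
                omega
              rw [hieq, hyeq, hygt j hjk]
              exact hρ_gt j hjk
          · have hik : k < (i:ℕ) := by omega
            have hjk : k < (j:ℕ) := by
              have := hij
              rw [Fin.le_def] at this
              omega
            rw [hygt i hik, hygt j hjk]
            exact hM_dec i j hij
      · intro i
        by_cases h1 : (i:ℕ) < k
        · rw [hylt i h1]; exact (hmM i).1
        · by_cases h2 : (i:ℕ) = k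
          · have : i = ⟨k, hkn⟩ := Fin.ext h2
            rw [this, hyeq]
            exact le_trans (hmM _).1 hρm
          · have : k < (i:ℕ) := by omega
            rw [hygt i this]
            exact le_trans (hmM i).1 (hmM i).2
    · intro i
      by_cases h1 : (i:ℕ) < k
      · rw [hylt i h1]; exact ⟨le_refl _, (hmM i).2⟩
      · by_cases h2 : (i:ℕ) = k
        · have heq : i = ⟨k, hkn⟩ := Fin.ext h2
          rw [heq, hyeq]
          exact ⟨hρm, le_of_lt hρM⟩
        · have : k < (i:ℕ) := by omega
          rw [hygt i this]
          exact ⟨(hmM i).2, le_refl _⟩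
  refine ⟨hmem, ?_⟩
  intro x hx
  obtain ⟨⟨hxdec, hxpos, hxsum⟩, hxb⟩ := hx
  constructor
  · intro t ht1 ht2
    by_cases htk : t ≤ k
    · -- psum y t = psum m t ≤ psum x t
      have h1 : psum y t = psum m t := by
        unfold psum
        apply Finset.sum_congr rfl
        intro i _
        by_cases h : (i:ℕ) < t
        · simp [h, hylt i (by omega)]
        · simp [h]
      rw [h1]
      unfold psum
      apply Finset.sum_le_sum
      intro i _
      by_cases h : (i:ℕ) < t
      · simp only [h, if_true]
        exact (hxb i).1
      · simp [h]
    · -- t ≥ k+1 : tail argument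
      push_neg at htk
      have htail : ∀ z : Fin n → ℝ, (∑ i, z i) =
          psum z t + ∑ i : Fin n, (if (i:ℕ) < t then 0 else z i) := by
        intro z
        unfold psum
        rw [← Finset.sum_add_distrib]
        apply Finset.sum_congr rfl
        intro i _
        split <;> simp
      have hyt : ∀ i : Fin n, ¬ (i:ℕ) < t → y i = M i := by
        intro i h
        exact hygt i (by omega)
      have h1 := htail y
      have h2 := htail x
      rw [hysum] at h1
      rw [hxsum] at h2
      have h3 : (∑ i : Fin n, (if (i:ℕ) < t then 0 else x i))
          ≤ ∑ i : Fin n, (if (i:ℕ) < t then 0 else y i) := by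
        apply Finset.sum_le_sum
        intro i _
        by_cases h : (i:ℕ) < t
        · simp [h]
        · simp only [h, if_false]
          rw [hyt i h]
          exact (hxb i).2
      linarith
  · rw [hysum, hxsum]
end
end

section
/- Let 1 ≤ h ≤ n, 0 ≤ m_2 ≤ m_1, 0 ≤ M_2 ≤ M_1, m_i < M_i for i = 1,2, and h·m_1 + (n−h)·m_2 ≤ a ≤ h·M_1 + (n−h)·M_2. Set ã = h·m_1 + (n−h)·M_2. If a < m_1·n and a ≤ ã, then the minimal element of S_a^[h] with respect to the majorization order is x_*(S_a^[h]) = m_1 s^h + ρ v^h with ρ = (a − h·m_1)/(n − h), i.e. the vector whose first h components equal m_1 and whose last n−h components equal ρ. -/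
open Finset

noncomputable section

lemma sum_ite_lt_const {n : ℕ} (k : ℕ) (hk : k ≤ n) (c : ℝ) :
    ∑ i : Fin n, (if (i:ℕ) < k then c else 0) = k * c := by
  rw [Fin.sum_univ_eq_sum_range (fun j => if j < k then c else 0) n, ← Finset.sum_filter]
  have : (Finset.range n).filter (fun j => j < k) = Finset.range k := by
    ext j; simp; omega
  rw [this, Finset.sum_const, Finset.card_range, nsmul_eq_mul]

lemma sum_ite_ge_const {n : ℕ} (k : ℕ) (hk : k ≤ n) (c : ℝ) :
    ∑ i : Fin n, (if k ≤ (i:ℕ) then c else 0) = ((n:ℝ) - k) * c := by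
  have h1 : ∀ i : Fin n, (if k ≤ (i:ℕ) then c else 0) = c - (if (i:ℕ) < k then c else 0) := by
    intro i; split_ifs with a b <;> first | ring1 | (exfalso; omega)
  rw [Finset.sum_congr rfl (fun i _ => h1 i), Finset.sum_sub_distrib,
    sum_ite_lt_const k hk, Finset.sum_const, Finset.card_univ, Fintype.card_fin, nsmul_eq_mul]
  ring

lemma sum_ite_between_const {n : ℕ} (h k : ℕ) (hhk : h ≤ k) (hk : k ≤ n) (c : ℝ) :
    ∑ i : Fin n, (if h ≤ (i:ℕ) ∧ (i:ℕ) < k then c else 0) = ((k:ℝ) - h) * c := by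
  have h1 : ∀ i : Fin n, (if h ≤ (i:ℕ) ∧ (i:ℕ) < k then c else 0)
      = (if (i:ℕ) < k then c else 0) - (if (i:ℕ) < h then c else 0) := by
    intro i; split_ifs with a b c' <;> first | ring1 | (exfalso; omega)
  rw [Finset.sum_congr rfl (fun i _ => h1 i), Finset.sum_sub_distrib,
    sum_ite_lt_const k hk, sum_ite_lt_const h (le_trans hhk hk)]
  ring

lemma arith_step (nr hr kr m1 a ρ PH PK U xj : ℝ)
    (hρE : ρ * (nr - hr) = a - hr * m1) (f1 : PK + U = a) (f2 : hr * m1 ≤ PH)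
    (f3 : U ≤ (nr - kr) * xj) (f4 : (kr - hr) * xj ≤ PK - PH)
    (h1 : hr ≤ kr) (h2 : kr ≤ nr) (h3 : 0 < nr - hr) (hx : 0 ≤ xj) :
    hr * m1 + (kr - hr) * ρ ≤ PK := by
  have key : (kr - hr) * U ≤ (nr - kr) * (PK - PH) := by
    calc (kr - hr) * U ≤ (kr - hr) * ((nr - kr) * xj) :=
          mul_le_mul_of_nonneg_left f3 (by linarith)
      _ = (nr - kr) * ((kr - hr) * xj) := by ring
      _ ≤ (nr - kr) * (PK - PH) := mul_le_mul_of_nonneg_left f4 (by linarith)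
  have prod : 0 ≤ (nr - kr) * (PH - hr * m1) := mul_nonneg (by linarith) (by linarith)
  have final : (nr - hr) * (hr * m1 + (kr - hr) * ρ) ≤ (nr - hr) * PK := by
    nlinarith [key, prod, hρE, f1]
  exact le_of_mul_le_mul_left final h3

/-- Minimal element of `S_a^[h]` when `a < m₁ n` and `a ≤ ã`:
`m₁ s^h + ρ v^h` with `ρ = (a - h m₁)/(n - h)`. -/
theorem minimal_element_of_Sh_low (n h : ℕ) (hh : 1 ≤ h) (hhn : h ≤ n)
    (a m1 m2 M1 M2 : ℝ) (ha : 0 < a)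
    (hm2 : 0 ≤ m2) (hm21 : m2 ≤ m1) (hM2 : 0 ≤ M2) (hM21 : M2 ≤ M1)
    (hmM1 : m1 < M1) (hmM2 : m2 < M2)
    (halow : h * m1 + (n - h : ℝ) * m2 ≤ a) (haup : a ≤ h * M1 + (n - h : ℝ) * M2)
    (atilde : ℝ) (hatilde : atilde = h * m1 + (n - h : ℝ) * M2)
    (hcase1 : a < m1 * n) (hcase2 : a ≤ atilde)
    (ρ : ℝ) (hρ : ρ = (a - h * m1) / ((n : ℝ) - h))
    (xmin : Fin n → ℝ)
    (hxmin : xmin = fun i => m1 * sv n h i + ρ * vv n h i) :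
    xmin ∈ Sh n h a M1 M2 m1 m2 ∧ ∀ x ∈ Sh n h a M1 M2 m1 m2, Maj xmin x := by
  -- basic facts
  have hltn : h < n := by
    rcases lt_or_eq_of_le hhn with h' | h'
    · exact h'
    · exfalso; subst h'
      have : ((h:ℝ) - h) = 0 := by ring
      rw [this] at halow
      nlinarith
  have hcn : (h:ℝ) < (n:ℝ) := by exact_mod_cast hltn
  have hnh0 : (0:ℝ) < (n:ℝ) - h := by linarith
  have hρE : ρ * ((n:ℝ) - h) = a - h * m1 := by
    rw [hρ]; field_simp
  have hρm2 : m2 ≤ ρ := by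
    rw [hρ, le_div_iff₀ hnh0]; nlinarith
  have hρM2 : ρ ≤ M2 := by
    rw [hρ, div_le_iff₀ hnh0]; rw [hatilde] at hcase2; nlinarith
  have hρm1 : ρ ≤ m1 := by
    rw [hρ, div_le_iff₀ hnh0]; nlinarith
  have hxe : ∀ i : Fin n, xmin i = if (i:ℕ) < h then m1 else ρ := by
    intro i; rw [hxmin]; simp only [sv, vv]; split_ifs <;> ring
  have hρ0 : 0 ≤ ρ := le_trans hm2 hρm2
  have hm10 : 0 ≤ m1 := le_trans hm2 hm21
  -- sum of xmin
  have hsumxmin : ∑ i, xmin i = a := by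
    have e : ∀ i : Fin n, xmin i = (if (i:ℕ) < h then (m1 - ρ) else 0) + ρ := by
      intro i; rw [hxe i]; split_ifs <;> ring
    rw [Finset.sum_congr rfl (fun i _ => e i), Finset.sum_add_distrib,
      sum_ite_lt_const h hhn, Finset.sum_const, Finset.card_univ, Fintype.card_fin, nsmul_eq_mul]
    nlinarith [hρE]
  have hmem : xmin ∈ Sh n h a M1 M2 m1 m2 := by
    refine ⟨⟨?_, ?_, hsumxmin⟩, ?_, ?_⟩
    · intro i j hij
      rw [hxe i, hxe j]
      have hij' : (i:ℕ) ≤ (j:ℕ) := hij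
      split_ifs <;> first | rfl | linarith | omega
    · intro i; rw [hxe i]; split_ifs <;> assumption
    · intro i hi; rw [hxe i, if_pos hi]; exact ⟨le_refl _, le_of_lt hmM1⟩
    · intro i hi; rw [hxe i, if_neg (by omega)]; exact ⟨hρm2, hρM2⟩
  refine ⟨hmem, fun x hx => ?_⟩
  obtain ⟨⟨hsort, hpos, hsum⟩, hb1, hb2⟩ := hx
  constructor
  · intro k hk1 hkn1
    have hkn : k < n := by omega
    simp only [psum]
    rcases le_or_gt k h with hkh | hkh
    · -- k ≤ h
      have e1 : ∑ i : Fin n, (if (i:ℕ) < k then xmin i else 0)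
          = ∑ i : Fin n, (if (i:ℕ) < k then m1 else 0) := by
        refine Finset.sum_congr rfl (fun i _ => ?_)
        rw [hxe i]; split_ifs <;> first | rfl | omega
      rw [e1, sum_ite_lt_const k (le_of_lt hkn)]
      calc (k:ℝ) * m1 = ∑ i : Fin n, (if (i:ℕ) < k then m1 else 0) :=
            (sum_ite_lt_const k (le_of_lt hkn) m1).symm
        _ ≤ ∑ i : Fin n, (if (i:ℕ) < k then x i else 0) := by
            refine Finset.sum_le_sum (fun i _ => ?_)
            split_ifs with hi
            · exact (hb1 i (by omega)).1
            · rfl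
    · -- h < k
      set PH : ℝ := ∑ i : Fin n, (if (i:ℕ) < h then x i else 0) with hPH
      set PK : ℝ := ∑ i : Fin n, (if (i:ℕ) < k then x i else 0) with hPK
      set U : ℝ := ∑ i : Fin n, (if k ≤ (i:ℕ) then x i else 0) with hU
      have f1 : PK + U = a := by
        rw [hPK, hU, ← Finset.sum_add_distrib, ← hsum]
        refine Finset.sum_congr rfl (fun i _ => ?_)
        split_ifs <;> first | ring1 | (exfalso; omega)
      have f2 : (h:ℝ) * m1 ≤ PH := by
        calc (h:ℝ) * m1 = ∑ i : Fin n, (if (i:ℕ) < h then m1 else 0) :=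
              (sum_ite_lt_const h hhn m1).symm
          _ ≤ PH := by
              refine Finset.sum_le_sum (fun i _ => ?_)
              split_ifs with hi
              · exact (hb1 i hi).1
              · rfl
      set j0 : Fin n := ⟨k - 1, by omega⟩ with hj0
      have f3 : U ≤ ((n:ℝ) - k) * x j0 := by
        calc U ≤ ∑ i : Fin n, (if k ≤ (i:ℕ) then x j0 else 0) := by
              refine Finset.sum_le_sum (fun i _ => ?_)
              split_ifs with hi
              · exact hsort j0 i (by simp [hj0, Fin.le_def]; omega)
              · rfl
          _ = ((n:ℝ) - k) * x j0 := sum_ite_ge_const k (le_of_lt hkn) (x j0)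
      have f4 : ((k:ℝ) - h) * x j0 ≤ PK - PH := by
        have e : PK - PH = ∑ i : Fin n, (if h ≤ (i:ℕ) ∧ (i:ℕ) < k then x i else 0) := by
          rw [hPK, hPH, ← Finset.sum_sub_distrib]
          refine Finset.sum_congr rfl (fun i _ => ?_)
          split_ifs <;> first | ring1 | (exfalso; omega)
        rw [e, ← sum_ite_between_const h k (le_of_lt hkh) (le_of_lt hkn) (x j0)]
        refine Finset.sum_le_sum (fun i _ => ?_)
        split_ifs with hi
        · exact hsort i j0 (by simp [hj0, Fin.le_def]; omega)
        · rfl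
      -- compute psum xmin k
      have exmin : ∑ i : Fin n, (if (i:ℕ) < k then xmin i else 0)
          = (h:ℝ) * m1 + ((k:ℝ) - h) * ρ := by
        have e : ∀ i : Fin n, (if (i:ℕ) < k then xmin i else 0)
            = (if (i:ℕ) < h then m1 else 0) + (if h ≤ (i:ℕ) ∧ (i:ℕ) < k then ρ else 0) := by
          intro i; rw [hxe i]; split_ifs <;> first | ring1 | (exfalso; omega)
        rw [Finset.sum_congr rfl (fun i _ => e i), Finset.sum_add_distrib,
          sum_ite_lt_const h hhn, sum_ite_between_const h k (le_of_lt hkh) (le_of_lt hkn)]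
      rw [exmin]
      have hkc : (h:ℝ) ≤ (k:ℝ) := by exact_mod_cast le_of_lt hkh
      have hnc : (k:ℝ) ≤ (n:ℝ) := by exact_mod_cast le_of_lt hkn
      exact arith_step (n:ℝ) (h:ℝ) (k:ℝ) m1 a ρ PH PK U (x j0) hρE f1 f2 f3 f4 hkc hnc hnh0 (hpos j0)
  · rw [hsumxmin, hsum]
end
end

section
/- Let 1 ≤ h ≤ n, 0 ≤ m_2 ≤ m_1, 0 ≤ M_2 ≤ M_1, m_i < M_i for i = 1,2, and h·m_1 + (n−h)·m_2 ≤ a ≤ h·M_1 + (n−h)·M_2. Set ã = h·m_1 + (n−h)·M_2. If a > M_2·n and a ≥ ã, then the minimal element of S_a^[h] with respect to the majorization order is x_*(S_a^[h]) = ρ s^h + M_2 v^h with ρ = (a − M_2(n − h))/h, i.e. the vector whose first h components equal ρ and whose last n−h components equal M_2. -/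
open Finset

noncomputable section

lemma Pcard {n k : ℕ} (hk : k ≤ n) :
    ((univ : Finset (Fin n)).filter fun i : Fin n => (i : ℕ) < k).card = k := by
  rcases lt_or_eq_of_le hk with hlt | rfl
  · have : ((univ : Finset (Fin n)).filter fun i : Fin n => (i : ℕ) < k) = Iio ⟨k, hlt⟩ := by
      ext i; simp [Fin.lt_def]
    rw [this, Fin.card_Iio]
  · have : ((univ : Finset (Fin k)).filter fun i : Fin k => (i : ℕ) < k) = univ := by
      ext i; simp [i.isLt]
    rw [this, card_univ, Fintype.card_fin]

lemma Qcard {n k : ℕ} (hk : k ≤ n) :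
    ((univ : Finset (Fin n)).filter fun i : Fin n => ¬ (i : ℕ) < k).card = n - k := by
  have h1 := Finset.card_filter_add_card_filter_not
    (s := (univ : Finset (Fin n))) (p := fun i : Fin n => (i : ℕ) < k)
  rw [Pcard hk, card_univ, Fintype.card_fin] at h1
  omega

lemma psum_filter {n : ℕ} (x : Fin n → ℝ) (k : ℕ) :
    psum x k = ∑ i ∈ (univ : Finset (Fin n)).filter (fun i : Fin n => (i : ℕ) < k), x i :=
  (Finset.sum_filter _ _).symm

lemma total_split {n : ℕ} (x : Fin n → ℝ) (k : ℕ) :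
    ∑ i, x i = psum x k +
      ∑ i ∈ (univ : Finset (Fin n)).filter (fun i : Fin n => ¬ (i : ℕ) < k), x i := by
  rw [psum_filter]
  exact (Finset.sum_filter_add_sum_filter_not univ _ x).symm

lemma tail_bound {n h k : ℕ} (x : Fin n → ℝ) (a M2 : ℝ) (hsum : ∑ i, x i = a)
    (hb : ∀ i : Fin n, h ≤ (i : ℕ) → x i ≤ M2) (hhk : h ≤ k) (hkn : k ≤ n) :
    a - ((n : ℝ) - k) * M2 ≤ psum x k := by
  have hle : ∑ i ∈ (univ : Finset (Fin n)).filter (fun i : Fin n => ¬ (i : ℕ) < k), x i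
      ≤ ((univ : Finset (Fin n)).filter (fun i : Fin n => ¬ (i : ℕ) < k)).card • M2 := by
    apply Finset.sum_le_card_nsmul
    intro i hi
    simp only [mem_filter, mem_univ, true_and, not_lt] at hi
    exact hb i (le_trans hhk hi)
  rw [Qcard hkn, nsmul_eq_mul, Nat.cast_sub hkn] at hle
  have := total_split x k
  rw [hsum] at this
  linarith

lemma front_ratio {n h k : ℕ} (x : Fin n → ℝ) (hmono : ∀ i j : Fin n, i ≤ j → x j ≤ x i)
    (hkh : k < h) (hhn : h ≤ n) :
    (k : ℝ) * psum x h ≤ (h : ℝ) * psum x k := by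
  have hkn : k < n := lt_of_lt_of_le hkh hhn
  set K : Fin n := ⟨k, hkn⟩ with hK
  set Pk := (univ : Finset (Fin n)).filter (fun i : Fin n => (i : ℕ) < k) with hPk
  set Ph := (univ : Finset (Fin n)).filter (fun i : Fin n => (i : ℕ) < h) with hPh
  have hsub : Pk ⊆ Ph := by
    intro i hi
    simp only [hPk, hPh, mem_filter, mem_univ, true_and] at *
    omega
  have hsplit := Finset.sum_sdiff (f := x) hsub
  have hcard : (Ph \ Pk).card = h - k := by
    rw [card_sdiff_of_subset hsub, hPh, hPk, Pcard hhn, Pcard hkn.le]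
  have c1 : Pk.card • x K ≤ ∑ i ∈ Pk, x i := by
    apply Finset.card_nsmul_le_sum
    intro i hi
    simp only [hPk, mem_filter, mem_univ, true_and] at hi
    exact hmono i K (by simp [Fin.le_def, hK]; omega)
  have c2 : ∑ i ∈ Ph \ Pk, x i ≤ (Ph \ Pk).card • x K := by
    apply Finset.sum_le_card_nsmul
    intro i hi
    simp only [mem_sdiff, hPk, hPh, mem_filter, mem_univ, true_and] at hi
    exact hmono K i (by simp [Fin.le_def, hK]; omega)
  rw [hcard, nsmul_eq_mul, Nat.cast_sub hkh.le] at c2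
  rw [hPk, Pcard hkn.le, nsmul_eq_mul] at c1
  have hpk : psum x k = ∑ i ∈ Pk, x i := psum_filter x k
  have hph : psum x h = ∑ i ∈ Ph, x i := psum_filter x h
  have hkR : (0 : ℝ) ≤ (k : ℝ) := Nat.cast_nonneg k
  have hhkR : (0 : ℝ) ≤ (h : ℝ) - k := by
    have : (k : ℝ) ≤ h := by exact_mod_cast hkh.le
    linarith
  nlinarith [mul_le_mul_of_nonneg_left c2 hkR, mul_le_mul_of_nonneg_left c1 hhkR]

/-- Minimal element of `S_a^[h]` when `a > M₂ n` and `a ≥ ã`: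
`ρ s^h + M₂ v^h` with `ρ = (a - M₂(n - h))/h`. -/
theorem minimal_element_of_Sh_high (n h : ℕ) (hh : 1 ≤ h) (hhn : h ≤ n)
    (a m1 m2 M1 M2 : ℝ) (ha : 0 < a)
    (hm2 : 0 ≤ m2) (hm21 : m2 ≤ m1) (hM2 : 0 ≤ M2) (hM21 : M2 ≤ M1)
    (hmM1 : m1 < M1) (hmM2 : m2 < M2)
    (halow : h * m1 + (n - h : ℝ) * m2 ≤ a) (haup : a ≤ h * M1 + (n - h : ℝ) * M2)
    (atilde : ℝ) (hatilde : atilde = h * m1 + (n - h : ℝ) * M2)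
    (hcase1 : M2 * n < a) (hcase2 : atilde ≤ a)
    (ρ : ℝ) (hρ : ρ = (a - M2 * ((n : ℝ) - h)) / h)
    (xmin : Fin n → ℝ)
    (hxmin : xmin = fun i => ρ * sv n h i + M2 * vv n h i) :
    xmin ∈ Sh n h a M1 M2 m1 m2 ∧ ∀ x ∈ Sh n h a M1 M2 m1 m2, Maj xmin x := by
  have hhR : (0 : ℝ) < h := by exact_mod_cast hh
  have hnR : (h : ℝ) ≤ n := by exact_mod_cast hhn
  have hxmin' : ∀ i : Fin n, xmin i = if (i : ℕ) < h then ρ else M2 := by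
    intro i
    simp only [hxmin, sv, vv]
    split_ifs <;> ring
  have hrho_eq : (h : ℝ) * ρ = a - M2 * ((n : ℝ) - h) := by
    rw [hρ]; field_simp
  have hrhoM2 : M2 < ρ := by
    rw [hρ, lt_div_iff₀ hhR]; nlinarith
  have hρm1 : m1 ≤ ρ := by
    rw [hρ, le_div_iff₀ hhR]
    rw [hatilde] at hcase2
    nlinarith
  have hρM1 : ρ ≤ M1 := by
    rw [hρ, div_le_iff₀ hhR]; nlinarith
  -- sum of xmin is a
  have hsum_xmin : ∑ i, xmin i = a := by
    have h1 : psum xmin h = (h : ℝ) * ρ := by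
      rw [psum_filter]
      have : ∀ i ∈ (univ : Finset (Fin n)).filter (fun i : Fin n => (i : ℕ) < h),
          xmin i = ρ := by
        intro i hi
        simp only [mem_filter, mem_univ, true_and] at hi
        rw [hxmin' i, if_pos hi]
      rw [Finset.sum_congr rfl this, Finset.sum_const, Pcard hhn, nsmul_eq_mul]
    have h2 : ∑ i ∈ (univ : Finset (Fin n)).filter (fun i : Fin n => ¬ (i : ℕ) < h), xmin i
        = ((n : ℝ) - h) * M2 := by
      have : ∀ i ∈ (univ : Finset (Fin n)).filter (fun i : Fin n => ¬ (i : ℕ) < h),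
          xmin i = M2 := by
        intro i hi
        simp only [mem_filter, mem_univ, true_and] at hi
        rw [hxmin' i, if_neg hi]
      rw [Finset.sum_congr rfl this, Finset.sum_const, Qcard hhn, nsmul_eq_mul,
        Nat.cast_sub hhn]
    rw [total_split xmin h, h1, h2, hrho_eq]; ring
  have hmem : xmin ∈ Sh n h a M1 M2 m1 m2 := by
    refine ⟨⟨?_, ?_, hsum_xmin⟩, ?_, ?_⟩
    · intro i j hij
      have hij' : (i : ℕ) ≤ (j : ℕ) := hij
      rw [hxmin' i, hxmin' j]
      split_ifs <;> first | linarith | omega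
    · intro i
      rw [hxmin' i]
      split_ifs <;> linarith
    · intro i hi
      rw [hxmin' i, if_pos hi]
      exact ⟨hρm1, hρM1⟩
    · intro i hi
      rw [hxmin' i, if_neg (not_lt.2 hi)]
      exact ⟨hmM2.le, le_refl _⟩
  refine ⟨hmem, ?_⟩
  intro x hx
  obtain ⟨⟨hmono, hnn, hsum⟩, hb1, hb2⟩ := hx
  constructor
  · intro k hk1 hk2
    have hkn : k ≤ n := by omega
    have hbx : ∀ i : Fin n, h ≤ (i : ℕ) → x i ≤ M2 := fun i hi => (hb2 i hi).2
    rcases le_or_gt h k with hhk | hkh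
    · -- k ≥ h : psum xmin k = a - (n-k) M2 ≤ psum x k
      have hx_tail := tail_bound x a M2 hsum hbx hhk hkn
      have hxmin_tail : psum xmin k = a - ((n : ℝ) - k) * M2 := by
        have h2 : ∑ i ∈ (univ : Finset (Fin n)).filter (fun i : Fin n => ¬ (i : ℕ) < k), xmin i
            = ((n : ℝ) - k) * M2 := by
          have : ∀ i ∈ (univ : Finset (Fin n)).filter (fun i : Fin n => ¬ (i : ℕ) < k),
              xmin i = M2 := by
            intro i hi
            simp only [mem_filter, mem_univ, true_and, not_lt] at hi
            rw [hxmin' i, if_neg (by omega)]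
          rw [Finset.sum_congr rfl this, Finset.sum_const, Qcard hkn, nsmul_eq_mul,
            Nat.cast_sub hkn]
        have := total_split xmin k
        rw [hsum_xmin, h2] at this
        linarith
      rw [hxmin_tail]
      exact hx_tail
    · -- k < h : psum xmin k = k ρ
      have hxmin_front : psum xmin k = (k : ℝ) * ρ := by
        rw [psum_filter]
        have : ∀ i ∈ (univ : Finset (Fin n)).filter (fun i : Fin n => (i : ℕ) < k),
            xmin i = ρ := by
          intro i hi
          simp only [mem_filter, mem_univ, true_and] at hi
          rw [hxmin' i, if_pos (by omega)]
        rw [Finset.sum_congr rfl this, Finset.sum_const, Pcard hkn, nsmul_eq_mul]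
      have hA := front_ratio x hmono hkh hhn
      have hB : (h : ℝ) * ρ ≤ psum x h := by
        rw [hrho_eq]
        have := tail_bound x a M2 hsum hbx le_rfl hhn
        linarith
      have hkR : (0 : ℝ) ≤ (k : ℝ) := Nat.cast_nonneg k
      rw [hxmin_front]
      have := mul_le_mul_of_nonneg_left hB hkR
      have h2 : (k : ℝ) * ((h : ℝ) * ρ) ≤ (h : ℝ) * psum x k := le_trans this hA
      nlinarith
  · rw [hsum_xmin, hsum]
end
end

section
/- Let 1 ≤ h ≤ n and 0 < α ≤ a/h, and consider S_a^2 = Σ_a ∩ {x ∈ ℝ^n : x_i ≥ α for i = 1,...,h}. If α ≤ a/n, the minimal element of S_a^2 with respect to the majorization order is (a/n) s^n. If α > a/n (so h < n), the minimal element is α s^h + ρ v^h with ρ = (a − αh)/(n − h). -/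
open Finset

noncomputable section

lemma chunk {n h k : ℕ} (hk : h ≤ k) (kn : k ≤ n) (y : ℕ → ℝ)
    (mono : ∀ i j : ℕ, i ≤ j → j < n → y j ≤ y i) :
    ((k : ℝ) - h) * ∑ i ∈ Finset.Ico k n, y i ≤ ((n : ℝ) - k) * ∑ i ∈ Finset.Ico h k, y i := by
  have key : ∑ _i ∈ Ico h k, ∑ j ∈ Ico k n, y j ≤ ∑ i ∈ Ico h k, ∑ _j ∈ Ico k n, y i := by
    apply Finset.sum_le_sum
    intro i hi
    apply Finset.sum_le_sum
    intro j hj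
    simp only [Finset.mem_Ico] at hi hj
    exact mono i j (le_trans (le_of_lt hi.2) hj.1) hj.2
  have l1 : ∑ _i ∈ Ico h k, ∑ j ∈ Ico k n, y j = ((k : ℝ) - h) * ∑ i ∈ Ico k n, y i := by
    rw [Finset.sum_const, Nat.card_Ico, nsmul_eq_mul, Nat.cast_sub hk]
  have l2 : ∑ i ∈ Ico h k, ∑ _j ∈ Ico k n, y i = ((n : ℝ) - k) * ∑ i ∈ Ico h k, y i := by
    rw [Finset.mul_sum]
    refine Finset.sum_congr rfl fun i _ => ?_
    rw [Finset.sum_const, Nat.card_Ico, nsmul_eq_mul, Nat.cast_sub kn]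
  rw [l1, l2] at key
  exact key

lemma chunk2 {n h k : ℕ} (hk : h ≤ k) (kn : k ≤ n) (y : ℕ → ℝ)
    (mono : ∀ i j : ℕ, i ≤ j → j < n → y j ≤ y i) :
    ((k : ℝ) - h) * ∑ i ∈ Finset.Ico h n, y i ≤ ((n : ℝ) - h) * ∑ i ∈ Finset.Ico h k, y i := by
  have hsplit : ∑ i ∈ Ico h k, y i + ∑ i ∈ Ico k n, y i = ∑ i ∈ Ico h n, y i :=
    Finset.sum_Ico_consecutive _ hk kn
  have := chunk hk kn y mono
  nlinarith [this, hsplit]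

lemma psum_eq_range {n : ℕ} (x : Fin n → ℝ) (y : ℕ → ℝ) (hy : ∀ i : Fin n, y i = x i)
    (k : ℕ) (hk : k ≤ n) : psum x k = ∑ i ∈ Finset.range k, y i := by
  unfold psum
  have : ∀ i : Fin n, (if (i : ℕ) < k then x i else 0) = (fun m => if m < k then y m else 0) (i : ℕ) := by
    intro i; simp [hy i]
  rw [Finset.sum_congr rfl (fun i _ => this i),
    Fin.sum_univ_eq_sum_range (fun m => if m < k then y m else 0) n]
  rw [← Finset.sum_filter]
  congr 1
  ext m
  simp only [Finset.mem_filter, Finset.mem_range]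
  omega

lemma psum_n {n : ℕ} (x : Fin n → ℝ) : psum x n = ∑ i, x i := by
  unfold psum
  exact Finset.sum_congr rfl fun i _ => by simp [i.is_lt]

/-- Minimal element of `S_a^2`: `(a/n) s^n` if `α ≤ a/n`, and `α s^h + ρ v^h` with
`ρ = (a - αh)/(n - h)` if `α > a/n`. -/
theorem minimal_element_of_S2 (n h : ℕ) (hh : 1 ≤ h) (hhn : h ≤ n)
    (a α : ℝ) (ha : 0 < a) (hα : 0 < α) (hαa : α ≤ a / h) :
    (α ≤ a / n →
      ∀ xmin : Fin n → ℝ, xmin = (fun _ => a / n) →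
        xmin ∈ S2 n h a α ∧ ∀ x ∈ S2 n h a α, Maj xmin x) ∧
    (a / n < α →
      ∀ xmin : Fin n → ℝ, xmin = (fun i => α * sv n h i + (a - α * h) / ((n : ℝ) - h) * vv n h i) →
        xmin ∈ S2 n h a α ∧ ∀ x ∈ S2 n h a α, Maj xmin x) := by
  have hn0 : 0 < n := lt_of_lt_of_le hh hhn
  have hnR : (0 : ℝ) < n := by exact_mod_cast hn0
  have hhR : (0 : ℝ) < h := by exact_mod_cast hh
  have hhnR : (h : ℝ) ≤ n := by exact_mod_cast hhn
  have hαh : α * h ≤ a := by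
    rw [le_div_iff₀ hhR] at hαa; exact hαa
  -- generic facts about members of S2
  constructor
  · -- case α ≤ a/n
    intro hcase xmin hxm
    subst hxm
    have hsum : ∑ _i : Fin n, (a / n) = a := by
      rw [Finset.sum_const, Finset.card_univ, Fintype.card_fin, nsmul_eq_mul]
      field_simp
    refine ⟨⟨⟨fun i j _ => le_refl _, fun i => le_of_lt (div_pos ha hnR), hsum⟩,
      fun i _ => hcase⟩, ?_⟩
    rintro x ⟨⟨hmono, hpos, hsx⟩, hbd⟩
    set y : ℕ → ℝ := fun m => if hm : m < n then x ⟨m, hm⟩ else 0 with hy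
    have hyx : ∀ i : Fin n, y (i : ℕ) = x i := by
      intro i; simp [hy, i.is_lt]
    have ymono : ∀ i j : ℕ, i ≤ j → j < n → y j ≤ y i := by
      intro i j hij hjn
      have hin : i < n := lt_of_le_of_lt hij hjn
      simp only [hy, dif_pos hjn, dif_pos hin]
      exact hmono ⟨i, hin⟩ ⟨j, hjn⟩ hij
    have hsuma : ∑ i ∈ Finset.range n, y i = a := by
      rw [← psum_eq_range x y hyx n le_rfl, psum_n, hsx]
    constructor
    · intro k hk1 hk2
      have hkn : k ≤ n := le_trans hk2 (Nat.sub_le n 1)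
      have hpsx : psum x k = ∑ i ∈ Finset.range k, y i := psum_eq_range x y hyx k hkn
      have hpsmin : psum (fun _ : Fin n => a / n) k = (k : ℝ) * (a / n) := by
        rw [psum_eq_range (fun _ : Fin n => a / n) (fun _ => a / n) (fun _ => rfl) k hkn,
          Finset.sum_const, Finset.card_range, nsmul_eq_mul]
      have hch := chunk2 (Nat.zero_le k) hkn y ymono
      simp only [Nat.cast_zero, sub_zero, ← Finset.range_eq_Ico] at hch
      rw [hsuma] at hch
      rw [hpsx, hpsmin]
      rw [mul_div_assoc', div_le_iff₀ hnR]
      nlinarith [hch]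
    · rw [hsum, hsx]
  · -- case a/n < α
    intro hcase xmin hxm
    have hhn' : h < n := by
      rcases lt_or_eq_of_le hhn with h' | h'
      · exact h'
      · exfalso; rw [h'] at hαa; exact absurd hαa (not_le.mpr hcase)
    have hnhR : (0 : ℝ) < (n : ℝ) - h := by
      have : (h : ℝ) < n := by exact_mod_cast hhn'
      linarith
    set ρ : ℝ := (a - α * h) / ((n : ℝ) - h) with hρ
    have hρ0 : 0 ≤ ρ := div_nonneg (by linarith) (le_of_lt hnhR)
    have hρα : ρ ≤ α := by
      rw [hρ, div_le_iff₀ hnhR]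
      have : a < α * n := by
        rw [div_lt_iff₀ hnR] at hcase; linarith
      nlinarith
    have hρeq : ρ * ((n : ℝ) - h) = a - α * h := by
      rw [hρ]; field_simp
    have hxmv : ∀ i : Fin n, xmin i = if (i : ℕ) < h then α else ρ := by
      intro i
      rw [hxm]
      simp only [sv, vv]
      split <;> simp [hρ]
    -- y-min as ℕ function
    set ymin : ℕ → ℝ := fun m => if m < h then α else ρ with hymin
    have hyminx : ∀ i : Fin n, ymin (i : ℕ) = xmin i := fun i => (hxmv i).symm
    have pxle : ∀ k : ℕ, k ≤ h → psum xmin k = (k : ℝ) * α := by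
      intro k hkh
      rw [psum_eq_range xmin ymin hyminx k (le_trans hkh hhn)]
      rw [Finset.sum_congr rfl (fun m hm => by
        simp only [hymin]
        rw [if_pos (lt_of_lt_of_le (Finset.mem_range.mp hm) hkh)])]
      rw [Finset.sum_const, Finset.card_range, nsmul_eq_mul]
    have pxge : ∀ k : ℕ, h ≤ k → k ≤ n → psum xmin k = (h : ℝ) * α + ((k : ℝ) - h) * ρ := by
      intro k hhk hkn
      rw [psum_eq_range xmin ymin hyminx k hkn, Finset.range_eq_Ico,
        ← Finset.sum_Ico_consecutive _ (Nat.zero_le h) hhk]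
      have e1 : ∑ i ∈ Finset.Ico 0 h, ymin i = (h : ℝ) * α := by
        rw [Finset.sum_congr rfl (fun m hm => by
          simp only [hymin]
          rw [if_pos (Finset.mem_Ico.mp hm).2])]
        rw [Finset.sum_const, Nat.card_Ico, Nat.sub_zero, nsmul_eq_mul]
      have e2 : ∑ i ∈ Finset.Ico h k, ymin i = ((k : ℝ) - h) * ρ := by
        rw [Finset.sum_congr rfl (fun m hm => by
          simp only [hymin]
          rw [if_neg (not_lt.mpr (Finset.mem_Ico.mp hm).1)])]
        rw [Finset.sum_const, Nat.card_Ico, nsmul_eq_mul, Nat.cast_sub hhk]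
      rw [e1, e2]
    have hsummin : ∑ i, xmin i = a := by
      rw [← psum_n, pxge n hhn le_rfl]
      nlinarith [hρeq]
    constructor
    · -- membership
      refine ⟨⟨?_, ?_, hsummin⟩, ?_⟩
      · intro i j hij
        rw [hxmv i, hxmv j]
        split_ifs with h1 h2 h2
        · exact le_refl _
        · exact absurd (lt_of_le_of_lt (show (i:ℕ) ≤ j from hij) h1) h2
        · exact hρα
        · exact le_refl _
      · intro i
        rw [hxmv i]
        split_ifs
        · exact le_of_lt hα
        · exact hρ0
      · intro i hi
        rw [hxmv i, if_pos hi]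
    · -- majorization
      rintro x ⟨⟨hmono, hpos, hsx⟩, hbd⟩
      set y : ℕ → ℝ := fun m => if hm : m < n then x ⟨m, hm⟩ else 0 with hy
      have hyx : ∀ i : Fin n, y (i : ℕ) = x i := by
        intro i; simp [hy, i.is_lt]
      have ymono : ∀ i j : ℕ, i ≤ j → j < n → y j ≤ y i := by
        intro i j hij hjn
        have hin : i < n := lt_of_le_of_lt hij hjn
        simp only [hy, dif_pos hjn, dif_pos hin]
        exact hmono ⟨i, hin⟩ ⟨j, hjn⟩ hij
      have hsuma : ∑ i ∈ Finset.range n, y i = a := by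
        rw [← psum_eq_range x y hyx n le_rfl, psum_n, hsx]
      have ybd : ∀ m : ℕ, m < h → α ≤ y m := by
        intro m hm
        have hmn : m < n := lt_of_lt_of_le hm hhn
        simp only [hy, dif_pos hmn]
        exact hbd ⟨m, hmn⟩ hm
      constructor
      · intro k hk1 hk2
        have hkn : k ≤ n := le_trans hk2 (Nat.sub_le n 1)
        have hpsx : psum x k = ∑ i ∈ Finset.range k, y i := psum_eq_range x y hyx k hkn
        by_cases hkh : k ≤ h
        · rw [pxle k hkh, hpsx]
          have : (k : ℝ) * α = ∑ _i ∈ Finset.range k, α := by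
            rw [Finset.sum_const, Finset.card_range, nsmul_eq_mul]
          rw [this]
          exact Finset.sum_le_sum fun m hm =>
            ybd m (lt_of_lt_of_le (Finset.mem_range.mp hm) hkh)
        · push_neg at hkh
          have hhk : h ≤ k := le_of_lt hkh
          rw [pxge k hhk hkn, hpsx]
          set s : ℝ := ∑ i ∈ Finset.range h, y i with hs
          set t : ℝ := ∑ i ∈ Finset.Ico h k, y i with ht
          have hsplit : ∑ i ∈ Finset.range k, y i = s + t := by
            rw [Finset.range_eq_Ico, ← Finset.sum_Ico_consecutive _ (Nat.zero_le h) hhk]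
            rw [hs, ht, Finset.range_eq_Ico]
          have hsα : (h : ℝ) * α ≤ s := by
            have : ∑ _i ∈ Finset.range h, α ≤ s :=
              Finset.sum_le_sum fun m hm => ybd m (Finset.mem_range.mp hm)
            rwa [Finset.sum_const, Finset.card_range, nsmul_eq_mul] at this
          have htail : ∑ i ∈ Finset.Ico h n, y i = a - s := by
            have : s + ∑ i ∈ Finset.Ico h n, y i = a := by
              rw [hs, Finset.range_eq_Ico, Finset.sum_Ico_consecutive _ (Nat.zero_le h) hhn,
                ← Finset.range_eq_Ico, hsuma]
            linarith
          have hch := chunk2 hhk hkn y ymono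
          rw [htail, ← ht] at hch
          have hkR : (k : ℝ) ≤ (n : ℝ) - 1 := by
            have : k + 1 ≤ n := by omega
            have := (Nat.cast_le (α := ℝ)).mpr this
            push_cast at this
            linarith
          have hhkR : (h : ℝ) ≤ k := by exact_mod_cast hhk
          rw [hsplit]
          nlinarith [hch, hρeq, hsα, mul_nonneg (show (0:ℝ) ≤ (n:ℝ) - k by linarith)
            (show (0:ℝ) ≤ s - (h : ℝ) * α by linarith)]
      · rw [hsummin, hsx]
end
end

section
/- Let G = (V,E) be a simple, connected, undirected graph with n ≥ 4 vertices, m edges, exactly h ≥ 1 pendant vertices with n − h ≥ 2, and nonincreasing degree sequence d_1 ≥ ... ≥ d_{n−h} ≥ 2 > d_{n−h+1} = ... = d_n = 1, satisfying 1 + d_1 ≤ d_{n−h} + d_{n−h−1}. Set m_1 = d_{n−h} + d_{n−h−1}, m_2 = 1 + d_{n−h}, M_1 = d_1 + d_2, M_2 = 1 + d_1, a = Σ_{i=1}^n d_i^2, and let x*(S_a^{m−h}) and x_*(S_a^{m−h}) denote the maximal and minimal elements with respect to the majorization order of S_a^{m−h} ⊂ ℝ^m. Then ( ‖x_*(S_a^{m−h})‖_2^2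 − Σ_{i=1}^n d_i^3 ) / 2 ≤ S(G) ≤ ( ‖x*(S_a^{m−h})‖_2^2 − Σ_{i=1}^n d_i^3 ) / 2, where ‖·‖_2 is the Euclidean norm. -/
open Finset

noncomputable section

/-- Degree of a vertex (with classical decidability of adjacency). -/
def deg {V : Type*} [Fintype V] (G : SimpleGraph V) (v : V) : ℕ :=
  letI := Classical.decEq V
  letI := Classical.decRel G.Adj
  G.degree v

/-- The finite set of edges of `G`. -/
def edgeF {V : Type*} [Fintype V] (G : SimpleGraph V) : Finset (Sym2 V) :=
  letI := Classical.decEq V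
  letI := Classical.decRel G.Adj
  G.edgeFinset

/-- Sum of the degrees of the two endpoints of an edge. -/
def dsum {V : Type*} [Fintype V] (G : SimpleGraph V) : Sym2 V → ℝ :=
  Sym2.lift ⟨fun u v => (deg G u : ℝ) + deg G v, fun u v => by ring⟩

/-- Product of the degrees of the two endpoints of an edge. -/
def dprod {V : Type*} [Fintype V] (G : SimpleGraph V) : Sym2 V → ℝ :=
  Sym2.lift ⟨fun u v => (deg G u : ℝ) * deg G v, fun u v => by ring⟩

/-- The second Zagreb index `S(G) = Σ_{(v_i,v_j) ∈ E} d_i d_j`. -/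
def zagreb2 {V : Type*} [Fintype V] (G : SimpleGraph V) : ℝ :=
  ∑ e ∈ edgeF G, dprod G e

/- ### Auxiliary lemmas -/

lemma deg_eq {V : Type*} [Fintype V] (G : SimpleGraph V) [DecidableRel G.Adj] (v : V) :
    deg G v = G.degree v := by
  unfold deg SimpleGraph.degree
  congr!

lemma edgeF_eq {V : Type*} [Fintype V] (G : SimpleGraph V) [DecidableRel G.Adj]
    [Fintype G.edgeSet] : edgeF G = G.edgeFinset := by
  unfold edgeF SimpleGraph.edgeFinset
  congr!

lemma mem_edgeF {V : Type*} [Fintype V] (G : SimpleGraph V) (x y : V) :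
    s(x, y) ∈ edgeF G ↔ G.Adj x y := by
  classical
  rw [edgeF_eq G, SimpleGraph.mem_edgeFinset, SimpleGraph.mem_edgeSet]

lemma dsum_mk {V : Type*} [Fintype V] (G : SimpleGraph V) (x y : V) :
    dsum G s(x, y) = (deg G x : ℝ) + deg G y := rfl

lemma hand {V : Type*} [Fintype V] [DecidableEq V] (G : SimpleGraph V) [DecidableRel G.Adj]
    (f : V → ℝ) (F : Sym2 V → ℝ) (hF : ∀ u v : V, F s(u, v) = f u + f v) :
    ∑ e ∈ G.edgeFinset, F e = ∑ v, (G.degree v : ℝ) * f v := by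
  have h1 : ∑ d : G.Dart, F d.edge = 2 * ∑ e ∈ G.edgeFinset, F e := by
    rw [← Finset.sum_fiberwise_of_maps_to' (g := SimpleGraph.Dart.edge)
      (t := G.edgeFinset) (fun d _ => by simp [SimpleGraph.Dart.edge_mem]) F, Finset.mul_sum]
    refine Finset.sum_congr rfl fun e he => ?_
    rw [Finset.sum_const, nsmul_eq_mul, G.dart_edge_fiber_card e
      (SimpleGraph.mem_edgeFinset.mp he)]
    norm_num
  have h2 : ∀ d : G.Dart, F d.edge = f d.fst + f d.snd := by
    intro d
    have : d.edge = s(d.fst, d.snd) := rfl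
    rw [this, hF]
  have h3 : ∑ d : G.Dart, f d.fst = ∑ v, (G.degree v : ℝ) * f v := by
    rw [← Finset.sum_fiberwise' Finset.univ (fun d : G.Dart => d.fst) f]
    refine Finset.sum_congr rfl fun v _ => ?_
    rw [Finset.sum_const, nsmul_eq_mul]
    congr 1
    exact_mod_cast G.dart_fst_fiber_card_eq_degree v
  have h4 : ∑ d : G.Dart, f d.snd = ∑ d : G.Dart, f d.fst := by
    rw [← Equiv.sum_comp (Function.Involutive.toPerm _ SimpleGraph.Dart.symm_involutive)
      (fun d : G.Dart => f d.fst)]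
    rfl
  have h5 : ∑ d : G.Dart, F d.edge = 2 * ∑ v, (G.degree v : ℝ) * f v := by
    simp_rw [h2]
    rw [Finset.sum_add_distrib, h4, h3]
    ring
  have := h1.symm.trans h5
  linarith

lemma handF {V : Type*} [Fintype V] (G : SimpleGraph V) (f : V → ℝ) (F : Sym2 V → ℝ)
    (hF : ∀ u v : V, F s(u, v) = f u + f v) :
    ∑ e ∈ edgeF G, F e = ∑ v, (deg G v : ℝ) * f v := by
  classical
  rw [edgeF_eq G, hand G f F hF]
  simp_rw [deg_eq]

lemma pendant_unique_nbr {V : Type*} [Fintype V] (G : SimpleGraph V) {z w w' : V}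
    (hz : deg G z = 1) (h1 : G.Adj z w) (h2 : G.Adj z w') : w = w' := by
  classical
  rw [deg_eq, ← SimpleGraph.card_neighborFinset_eq_degree] at hz
  obtain ⟨a, ha⟩ := Finset.card_eq_one.mp hz
  have hw : w ∈ G.neighborFinset z := (G.mem_neighborFinset z w).mpr h1
  have hw' : w' ∈ G.neighborFinset z := (G.mem_neighborFinset z w').mpr h2
  rw [ha, Finset.mem_singleton] at hw hw'
  rw [hw, hw']

lemma no_two_pendant {V : Type*} [Fintype V] (G : SimpleGraph V) (hconn : G.Connected)
    (hcard : 3 ≤ Fintype.card V) {u v : V} (huv : G.Adj u v)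
    (hu : deg G u = 1) (hv : deg G v = 1) : False := by
  classical
  have key : ∀ (z w : V) (p : G.Walk z w), (z = u ∨ z = v) → (w = u ∨ w = v) := by
    intro z w p
    induction p with
    | nil => exact id
    | @cons z b w hadj p ih =>
        intro hz
        apply ih
        rcases hz with rfl | rfl
        · right; exact pendant_unique_nbr G hu hadj huv
        · left; exact pendant_unique_nbr G hv hadj huv.symm
  obtain ⟨w, hwu, hwv⟩ : ∃ w : V, w ≠ u ∧ w ≠ v := by
    by_contra hcon
    push_neg at hcon
    have hsub : (Finset.univ : Finset V) ⊆ {u, v} := by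
      intro w _
      by_cases hwu : w = u
      · simp [hwu]
      · simp [hcon w hwu]
    have hle := Finset.card_le_card hsub
    have h2 : ({u, v} : Finset V).card ≤ 2 :=
      le_trans (Finset.card_insert_le _ _) (by simp)
    rw [Finset.card_univ] at hle
    omega
  obtain ⟨p⟩ := hconn.preconnected u w
  rcases key u w p (Or.inl rfl) with h | h
  exacts [hwu h, hwv h]

lemma schur {q : ℕ} (x y : Fin q → ℝ)
    (hy : ∀ i j : Fin q, i ≤ j → y j ≤ y i) (hmaj : Maj y x) :
    ∑ i, (y i) ^ 2 ≤ ∑ i, (x i) ^ 2 := by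
  rcases Nat.eq_zero_or_pos q with rfl | hq
  · simp
  set x' : ℕ → ℝ := fun i => if h : i < q then x ⟨i, h⟩ else 0 with hx'
  set y' : ℕ → ℝ := fun i => if h : i < q then y ⟨i, h⟩ else 0 with hy'
  have hgen : ∀ (z : Fin q → ℝ) (z' : ℕ → ℝ), z' = (fun i => if h : i < q then z ⟨i, h⟩ else 0) →
      ∀ k, k ≤ q → psum z k = ∑ i ∈ Finset.range k, z' i := by
    intro z z' hz k hk
    have h1 : psum z k = ∑ i ∈ Finset.range q, (if i < k then z' i else 0) := by
      rw [← Fin.sum_univ_eq_sum_range (fun i => if i < k then z' i else 0) q]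
      refine Finset.sum_congr rfl fun i _ => ?_
      by_cases h : (i : ℕ) < k <;> simp [psum, hz, h, i.isLt]
    rw [h1, ← Finset.sum_filter]
    congr 1
    ext i
    simp only [Finset.mem_filter, Finset.mem_range]
    omega
  have hfin : ∀ (z : Fin q → ℝ) (z' : ℕ → ℝ), z' = (fun i => if h : i < q then z ⟨i, h⟩ else 0) →
      ∀ g : ℝ → ℝ, g 0 = 0 → ∑ i : Fin q, g (z i) = ∑ i ∈ Finset.range q, g (z' i) := by
    intro z z' hz g hg
    rw [← Fin.sum_univ_eq_sum_range (fun i => g (z' i)) q]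
    refine Finset.sum_congr rfl fun i _ => ?_
    simp [hz, i.isLt]
  set d : ℕ → ℝ := fun i => x' i - y' i with hd
  have hDq : ∑ i ∈ Finset.range q, d i = 0 := by
    have e1 := hfin x x' rfl id rfl
    have e2 := hfin y y' rfl id rfl
    simp only [id] at e1 e2
    simp only [hd, Finset.sum_sub_distrib]
    rw [← e1, ← e2, hmaj.2]
    ring
  have hD : ∀ k, 1 ≤ k → k ≤ q - 1 → 0 ≤ ∑ i ∈ Finset.range k, d i := by
    intro k h1 h2
    have := hmaj.1 k h1 h2
    rw [hgen y y' rfl k (by omega), hgen x x' rfl k (by omega)] at this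
    simp only [hd, Finset.sum_sub_distrib]
    linarith
  have habel : 0 ≤ ∑ i ∈ Finset.range q, y' i * d i := by
    have := Finset.sum_range_by_parts y' d q
    simp only [smul_eq_mul] at this
    rw [this, hDq, mul_zero, zero_sub, le_neg, neg_zero]
    apply Finset.sum_nonpos
    intro i hi
    rw [Finset.mem_range] at hi
    have hy1 : y' (i + 1) ≤ y' i := by
      have hi1 : i + 1 < q := by omega
      have := hy ⟨i, by omega⟩ ⟨i + 1, hi1⟩ (by simp [Fin.le_def])
      simp only [hy']
      rw [dif_pos hi1, dif_pos (by omega : i < q)]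
      exact this
    have hD1 : 0 ≤ ∑ j ∈ Finset.range (i + 1), d j := hD (i + 1) (by omega) (by omega)
    exact mul_nonpos_of_nonpos_of_nonneg (by linarith) hD1
  have key : ∀ i, 2 * (y' i * d i) ≤ x' i ^ 2 - y' i ^ 2 := by
    intro i
    have := sq_nonneg (x' i - y' i)
    simp only [hd]
    nlinarith
  have hsum : 2 * ∑ i ∈ Finset.range q, y' i * d i ≤
      ∑ i ∈ Finset.range q, (x' i ^ 2 - y' i ^ 2) := by
    rw [Finset.mul_sum]
    exact Finset.sum_le_sum fun i _ => key i
  have e1 := hfin x x' rfl (fun t => t ^ 2) (by norm_num)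
  have e2 := hfin y y' rfl (fun t => t ^ 2) (by norm_num)
  rw [e1, e2, ← sub_nonneg, ← Finset.sum_sub_distrib]
  linarith
set_option maxHeartbeats 2000000 in
/-- Bounds for the second Zagreb index via the extremal elements of `S_a^{q-h}` (`q = |E|`):
`(‖x_*‖₂² − Σ d_i³)/2 ≤ S(G) ≤ (‖x*‖₂² − Σ d_i³)/2`. -/
theorem zagreb2_bounds (n h q : ℕ) (hn : 4 ≤ n) (hh : 1 ≤ h) (hnh : h + 2 ≤ n)
    (G : SimpleGraph (Fin n)) (hconn : G.Connected)
    (hq : (edgeF G).card = q)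
    (hsorted : ∀ i j : Fin n, i ≤ j → deg G j ≤ deg G i)
    (hbig : ∀ i : Fin n, (i : ℕ) < n - h → 2 ≤ deg G i)
    (hone : ∀ i : Fin n, n - h ≤ (i : ℕ) → deg G i = 1)
    (hpend : (Finset.univ.filter fun v => deg G v = 1).card = h)
    (hlim : 1 + deg G (⟨0, by omega⟩ : Fin n) ≤
        deg G (⟨n - h - 1, by omega⟩ : Fin n) + deg G (⟨n - h - 2, by omega⟩ : Fin n))
    (m1 m2 M1 M2 a : ℝ)
    (hm1 : m1 = deg G (⟨n - h - 1, by omega⟩ : Fin n) + deg G (⟨n - h - 2, by omega⟩ : Fin n))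
    (hm2 : m2 = 1 + deg G (⟨n - h - 1, by omega⟩ : Fin n))
    (hM1 : M1 = deg G (⟨0, by omega⟩ : Fin n) + deg G (⟨1, by omega⟩ : Fin n))
    (hM2 : M2 = 1 + deg G (⟨0, by omega⟩ : Fin n))
    (ha : a = ∑ i : Fin n, (deg G i : ℝ) ^ 2)
    (xM xm : Fin q → ℝ)
    (hxM : xM ∈ Sh q (q - h) a M1 M2 m1 m2 ∧ ∀ y ∈ Sh q (q - h) a M1 M2 m1 m2, Maj y xM)
    (hxm : xm ∈ Sh q (q - h) a M1 M2 m1 m2 ∧ ∀ y ∈ Sh q (q - h) a M1 M2 m1 m2, Maj xm y) :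
    ((∑ i, (xm i) ^ 2) - ∑ v : Fin n, (deg G v : ℝ) ^ 3) / 2 ≤ zagreb2 G ∧
    zagreb2 G ≤ ((∑ i, (xM i) ^ 2) - ∑ v : Fin n, (deg G v : ℝ) ^ 3) / 2 := by
  classical
  obtain ⟨hxMmem, hxMmax⟩ := hxM
  obtain ⟨hxmmem, hxmmin⟩ := hxm
  -- basic degree facts
  have hge1 : ∀ v : Fin n, 1 ≤ deg G v := by
    intro v
    by_cases hv : (v : ℕ) < n - h
    · exact le_trans one_le_two (hbig v hv)
    · rw [hone v (by omega)]
  have hlt' : ∀ v : Fin n, deg G v ≠ 1 → (v : ℕ) < n - h := by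
    intro v hv
    by_contra hc
    exact hv (hone v (by omega))
  have hcard3 : 3 ≤ Fintype.card (Fin n) := by rw [Fintype.card_fin]; omega
  have hnoPP : ∀ u v : Fin n, G.Adj u v → deg G u = 1 → deg G v = 1 → False :=
    fun u v huv hu hv => no_two_pendant G hconn hcard3 huv hu hv
  -- neighbor function
  have hex : ∀ u : Fin n, ∃ w, G.Adj u w := by
    intro u
    have h0 : 0 < G.degree u := by rw [← deg_eq]; have := hge1 u; omega
    exact (G.degree_pos_iff_exists_adj u).mp h0
  choose nb hnb using hex
  -- edge sets
  set B : Finset (Sym2 (Fin n)) := (edgeF G).filter (fun e => ∃ v ∈ e, deg G v = 1) with hBdef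
  set A : Finset (Sym2 (Fin n)) := (edgeF G).filter (fun e => ¬ ∃ v ∈ e, deg G v = 1) with hAdef
  have hBA : ∀ F : Sym2 (Fin n) → ℝ, (∑ e ∈ B, F e) + (∑ e ∈ A, F e) = ∑ e ∈ edgeF G, F e :=
    fun F => Finset.sum_filter_add_sum_filter_not (edgeF G) _ F
  have hcards : B.card + A.card = q := by
    rw [← hq, hBdef, hAdef]
    exact Finset.card_filter_add_card_filter_not _
  -- card B = h
  have hPB : (Finset.univ.filter fun v : Fin n => deg G v = 1).card = B.card := by
    refine Finset.card_bij (fun a _ => s(a, nb a)) ?_ ?_ ?_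
    · intro a ha
      rw [Finset.mem_filter] at ha
      rw [hBdef, Finset.mem_filter]
      exact ⟨(mem_edgeF G a (nb a)).mpr (hnb a), ⟨a, by simp, ha.2⟩⟩
    · intro a1 ha1 a2 ha2 heq
      rw [Finset.mem_filter] at ha1 ha2
      rw [Sym2.eq_iff] at heq
      rcases heq with ⟨h1, _⟩ | ⟨h1, h2⟩
      · exact h1
      · exfalso
        exact hnoPP a2 a1 (h1 ▸ hnb a2) ha2.2 ha1.2
    · intro e he
      rw [hBdef, Finset.mem_filter] at he
      revert he
      induction e using Sym2.ind with
      | _ x y =>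
        rintro ⟨heE, v, hve, hv1⟩
        rw [Sym2.mem_iff] at hve
        have hadj : G.Adj x y := (mem_edgeF G x y).mp heE
        rcases hve with rfl | rfl
        · refine ⟨v, Finset.mem_filter.mpr ⟨Finset.mem_univ _, hv1⟩, ?_⟩
          show s(v, nb v) = s(v, y)
          rw [pendant_unique_nbr G hv1 (hnb v) hadj]
        · refine ⟨v, Finset.mem_filter.mpr ⟨Finset.mem_univ _, hv1⟩, ?_⟩
          show s(v, nb v) = s(x, v)
          rw [pendant_unique_nbr G hv1 (hnb v) hadj.symm, Sym2.eq_swap]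
  have hBh : B.card = h := by rw [← hPB, hpend]
  have hhq : h ≤ q := by omega
  have hAcard : A.card = q - h := by omega
  -- degree comparison lemmas
  have pairUB : ∀ x y : Fin n, (x : ℕ) < (y : ℕ) → (deg G x : ℝ) + deg G y ≤ M1 := by
    intro x y hxy
    rw [hM1]
    have h1 : deg G x ≤ deg G (⟨0, by omega⟩ : Fin n) := hsorted _ x (by simp [Fin.le_def])
    have h2 : deg G y ≤ deg G (⟨1, by omega⟩ : Fin n) := by
      refine hsorted _ y ?_
      rw [Fin.le_def]
      simpa using by omega
    push_cast
    have := add_le_add h1 h2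
    exact_mod_cast this
  have pairLB : ∀ x y : Fin n, (x : ℕ) < (y : ℕ) → (y : ℕ) < n - h →
      m1 ≤ (deg G x : ℝ) + deg G y := by
    intro x y hxy hyn
    rw [hm1]
    have h1 : deg G (⟨n - h - 2, by omega⟩ : Fin n) ≤ deg G x := by
      refine hsorted x _ ?_
      rw [Fin.le_def]
      simpa using by omega
    have h2 : deg G (⟨n - h - 1, by omega⟩ : Fin n) ≤ deg G y := by
      refine hsorted y _ ?_
      rw [Fin.le_def]
      simpa using by omega
    have := add_le_add h2 h1
    push_cast
    have h3 : (deg G (⟨n - h - 1, by omega⟩ : Fin n) : ℝ) + deg G (⟨n - h - 2, by omega⟩ : Fin n)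
        ≤ (deg G y : ℝ) + deg G x := by exact_mod_cast this
    linarith
  -- bounds on edge classes
  have hAbound : ∀ e ∈ A, m1 ≤ dsum G e ∧ dsum G e ≤ M1 := by
    intro e
    induction e using Sym2.ind with
    | _ x y =>
      intro he
      rw [hAdef, Finset.mem_filter] at he
      obtain ⟨heE, hno⟩ := he
      have hadj : G.Adj x y := (mem_edgeF G x y).mp heE
      have hx1 : deg G x ≠ 1 := fun hc => hno ⟨x, by simp, hc⟩
      have hy1 : deg G y ≠ 1 := fun hc => hno ⟨y, by simp, hc⟩
      have hxn := hlt' x hx1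
      have hyn := hlt' y hy1
      have hne : (x : ℕ) ≠ (y : ℕ) := fun hc => hadj.ne (Fin.ext hc)
      rw [dsum_mk]
      rcases lt_or_gt_of_ne hne with hlt | hlt
      · exact ⟨pairLB x y hlt hyn, pairUB x y hlt⟩
      · exact ⟨by linarith [pairLB y x hlt hxn], by linarith [pairUB y x hlt]⟩
  have hBbound : ∀ e ∈ B, m2 ≤ dsum G e ∧ dsum G e ≤ M2 := by
    have aux : ∀ x y : Fin n, G.Adj x y → deg G y = 1 →
        m2 ≤ (deg G x : ℝ) + deg G y ∧ (deg G x : ℝ) + deg G y ≤ M2 := by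
      intro x y hadj hy1
      have hx1 : deg G x ≠ 1 := fun hc => hnoPP x y hadj hc hy1
      have hxn := hlt' x hx1
      rw [hy1, hm2, hM2]
      constructor
      · have h1 : deg G (⟨n - h - 1, by omega⟩ : Fin n) ≤ deg G x := by
          refine hsorted x _ ?_
          rw [Fin.le_def]
          simpa using by omega
        have h1' : (deg G (⟨n - h - 1, by omega⟩ : Fin n) : ℝ) ≤ deg G x := by exact_mod_cast h1
        push_cast
        linarith
      · have h1 : deg G x ≤ deg G (⟨0, by omega⟩ : Fin n) := hsorted _ x (by simp [Fin.le_def])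
        have h1' : (deg G x : ℝ) ≤ deg G (⟨0, by omega⟩ : Fin n) := by exact_mod_cast h1
        push_cast
        linarith
    intro e
    induction e using Sym2.ind with
    | _ x y =>
      intro he
      rw [hBdef, Finset.mem_filter] at he
      obtain ⟨heE, v, hve, hv1⟩ := he
      have hadj : G.Adj x y := (mem_edgeF G x y).mp heE
      rw [Sym2.mem_iff] at hve
      rw [dsum_mk]
      rcases hve with rfl | rfl
      · have := aux y v hadj.symm hv1
        exact ⟨by linarith [this.1], by linarith [this.2]⟩
      · exact aux x v hadj hv1
  -- global sums over edges
  have hsum_dsum : ∑ e ∈ edgeF G, dsum G e = a := by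
    rw [ha, handF G (fun v => (deg G v : ℝ)) (dsum G) (fun u v => dsum_mk G u v)]
    exact Finset.sum_congr rfl fun v _ => by ring
  have hsum_sq : ∑ e ∈ edgeF G, (dsum G e) ^ 2 =
      (∑ v, (deg G v : ℝ) ^ 3) + 2 * zagreb2 G := by
    have hptw : ∀ e ∈ edgeF G, (dsum G e) ^ 2 =
        (Sym2.lift ⟨fun u v => (deg G u : ℝ) ^ 2 + (deg G v : ℝ) ^ 2, fun u v => by ring⟩) e
          + 2 * dprod G e := by
      intro e _
      induction e using Sym2.ind with
      | _ x y =>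
        rw [dsum_mk]
        simp only [Sym2.lift_mk, dprod]
        ring
    rw [Finset.sum_congr rfl hptw, Finset.sum_add_distrib,
      handF G (fun v => (deg G v : ℝ) ^ 2) _ (fun u v => by simp), ← Finset.mul_sum]
    have : zagreb2 G = ∑ e ∈ edgeF G, dprod G e := rfl
    rw [← this]
    congr 1
    exact Finset.sum_congr rfl fun v _ => by ring
  -- build the sorted edge-value vector
  have hqsplit : (q - h) + h = q := by omega
  let EA : Fin (q - h) ≃ ↥A := (finCongr hAcard.symm).trans A.equivFin.symm
  let EB : Fin h ≃ ↥B := (finCongr hBh.symm).trans B.equivFin.symm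
  let wA : Fin (q - h) → ℝ := fun i => dsum G ((EA i : ↥A) : Sym2 (Fin n))
  let wB : Fin h → ℝ := fun i => dsum G ((EB i : ↥B) : Sym2 (Fin n))
  let σA := Tuple.sort wA
  let σB := Tuple.sort wB
  let yA : Fin (q - h) → ℝ := fun i => wA (σA i.rev)
  let yB : Fin h → ℝ := fun i => wB (σB i.rev)
  have hyAsum : ∀ g : ℝ → ℝ, ∑ i, g (yA i) = ∑ e ∈ A, g (dsum G e) := by
    intro g
    have h1 : ∑ i, g (yA i) = ∑ i, g (wA i) :=
      Equiv.sum_comp (Fin.revPerm.trans σA) (fun i => g (wA i))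
    rw [h1]
    exact (Equiv.sum_comp EA fun e => g (dsum G (e : Sym2 (Fin n)))).trans
      (Finset.sum_coe_sort A (fun e => g (dsum G e)))
  have hyBsum : ∀ g : ℝ → ℝ, ∑ i, g (yB i) = ∑ e ∈ B, g (dsum G e) := by
    intro g
    have h1 : ∑ i, g (yB i) = ∑ i, g (wB i) :=
      Equiv.sum_comp (Fin.revPerm.trans σB) (fun i => g (wB i))
    rw [h1]
    exact (Equiv.sum_comp EB fun e => g (dsum G (e : Sym2 (Fin n)))).trans
      (Finset.sum_coe_sort B (fun e => g (dsum G e)))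
  have hyAanti : ∀ i j : Fin (q - h), i ≤ j → yA j ≤ yA i := by
    intro i j hij
    exact Tuple.monotone_sort wA (Fin.rev_le_rev.mpr hij)
  have hyBanti : ∀ i j : Fin h, i ≤ j → yB j ≤ yB i := by
    intro i j hij
    exact Tuple.monotone_sort wB (Fin.rev_le_rev.mpr hij)
  have hyAbd : ∀ i, m1 ≤ yA i ∧ yA i ≤ M1 := fun i => hAbound _ (EA (σA i.rev)).2
  have hyBbd : ∀ i, m2 ≤ yB i ∧ yB i ≤ M2 := fun i => hBbound _ (EB (σB i.rev)).2
  let E : Fin (q - h) ⊕ Fin h ≃ Fin q := finSumFinEquiv.trans (finCongr hqsplit)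
  let y : Fin q → ℝ := fun i => Sum.elim yA yB (E.symm i)
  have hEl : ∀ a : Fin (q - h), ((E (Sum.inl a)) : ℕ) = (a : ℕ) := by
    intro a; simp [E]
  have hEr : ∀ b : Fin h, ((E (Sum.inr b)) : ℕ) = (q - h) + (b : ℕ) := by
    intro b; simp [E]
  have hysum : ∀ g : ℝ → ℝ, ∑ i, g (y i) = (∑ i, g (yA i)) + ∑ i, g (yB i) := by
    intro g
    rw [← Equiv.sum_comp E (fun i => g (y i)), Fintype.sum_sum_type]
    simp only [y, Equiv.symm_apply_apply, Sum.elim_inl, Sum.elim_inr]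
  have hyA' : ∀ (i : Fin q) (hc : (i : ℕ) < q - h), y i = yA ⟨i, hc⟩ := by
    intro i hc
    have hsymm : E.symm i = Sum.inl ⟨i, hc⟩ := by
      rw [Equiv.symm_apply_eq]
      exact Fin.ext (by rw [hEl])
    simp only [y, hsymm, Sum.elim_inl]
  have hyB' : ∀ (i : Fin q) (hc : q - h ≤ (i : ℕ)) (hlt2 : (i : ℕ) - (q - h) < h),
      y i = yB ⟨(i : ℕ) - (q - h), hlt2⟩ := by
    intro i hc hlt2
    have hsymm : E.symm i = Sum.inr ⟨(i : ℕ) - (q - h), hlt2⟩ := by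
      rw [Equiv.symm_apply_eq]
      refine Fin.ext ?_
      rw [hEr]
      simp
      omega
    simp only [y, hsymm, Sum.elim_inr]
  -- membership in Sh
  have hm1M2 : M2 ≤ m1 := by
    rw [hM2, hm1]
    exact_mod_cast hlim
  have hm20 : (0 : ℝ) ≤ m2 := by rw [hm2]; positivity
  have hm10 : (0 : ℝ) ≤ m1 := by rw [hm1]; positivity
  have hySh : y ∈ Sh q (q - h) a M1 M2 m1 m2 := by
    refine ⟨⟨?_, ?_, ?_⟩, ?_, ?_⟩
    · intro i j hij
      rw [Fin.le_def] at hij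
      by_cases hj : (j : ℕ) < q - h
      · have hi : (i : ℕ) < q - h := by omega
        rw [hyA' i hi, hyA' j hj]
        exact hyAanti _ _ (by exact Fin.mk_le_mk.mpr hij)
      · by_cases hi : (i : ℕ) < q - h
        · rw [hyA' i hi, hyB' j (by omega) (by have := j.isLt; omega)]
          have h1 := (hyAbd ⟨i, hi⟩).1
          have h2 := (hyBbd ⟨(j : ℕ) - (q - h), by have := j.isLt; omega⟩).2
          linarith
        · rw [hyB' i (by omega) (by have := i.isLt; omega),
            hyB' j (by omega) (by have := j.isLt; omega)]
          exact hyBanti _ _ (Fin.mk_le_mk.mpr (by omega))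
    · intro i
      by_cases hi : (i : ℕ) < q - h
      · rw [hyA' i hi]; linarith [(hyAbd ⟨i, hi⟩).1]
      · rw [hyB' i (by omega) (by have := i.isLt; omega)]
        linarith [(hyBbd ⟨(i : ℕ) - (q - h), by have := i.isLt; omega⟩).1]
    · have h1 := hysum id
      simp only [id] at h1
      have h2 := hyAsum id
      have h3 := hyBsum id
      simp only [id] at h2 h3
      rw [h1, h2, h3, add_comm, hBA, hsum_dsum]
    · intro i hi
      rw [hyA' i hi]
      exact hyAbd _
    · intro i hi
      rw [hyB' i hi (by have := i.isLt; omega)]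
      exact hyBbd _
  -- conclusion
  have hyMon : ∀ i j : Fin q, i ≤ j → y j ≤ y i := hySh.1.1
  have hmaj1 : Maj y xM := hxMmax y hySh
  have hmaj2 : Maj xm y := hxmmin y hySh
  have s1 : ∑ i, (y i) ^ 2 ≤ ∑ i, (xM i) ^ 2 := schur xM y hyMon hmaj1
  have s2 : ∑ i, (xm i) ^ 2 ≤ ∑ i, (y i) ^ 2 := schur y xm hxmmem.1.1 hmaj2
  have sY : ∑ i, (y i) ^ 2 = (∑ v, (deg G v : ℝ) ^ 3) + 2 * zagreb2 G := by
    have h1 := hysum (fun t => t ^ 2)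
    have h2 := hyAsum (fun t => t ^ 2)
    have h3 := hyBsum (fun t => t ^ 2)
    rw [h1, h2, h3, add_comm, hBA, hsum_sq]
  constructor <;> [linarith; linarith]
end
end

section
/- Let 2 ≤ s < t < 2s and let T be any tree with degree sequence π_1 = (t, s,...,s (t times), 1,...,1 (t(s−1) times)). If t < 2s − 1, then (1/2) t (3t − t^2 − 5s + 2st + 3s^2) ≤ S(T) ≤ ts(s + t − 1); if t = 2s − 1, then (1/2)(2s − 1)(3s + 3s^2 − 4) ≤ S(T) ≤ s(2s − 1)(3s − 2). -/
open Finset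

noncomputable section

set_option maxHeartbeats 1000000 in
/-- Bounds for the second Zagreb index of any tree with degree sequence
`π₁ = (t, s,...,s (t times), 1,...,1 (t(s-1) times))`, `2 ≤ s < t < 2s`. -/
theorem zagreb2_bounds_of_tree_pi1 {V : Type*} [Fintype V]
    (T : SimpleGraph V) (hT : T.IsTree)
    (s t : ℕ) (hs : 2 ≤ s) (hst : s < t) (hts : t < 2 * s)
    (hdegs : ∀ v : V, deg T v = t ∨ deg T v = s ∨ deg T v = 1)
    (hct : (Finset.univ.filter fun v => deg T v = t).card = 1)
    (hcs : (Finset.univ.filter fun v => deg T v = s).card = t)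
    (hc1 : (Finset.univ.filter fun v => deg T v = 1).card = t * (s - 1)) :
    (t < 2 * s - 1 →
      1 / 2 * (t : ℝ) * (3 * t - t ^ 2 - 5 * s + 2 * s * t + 3 * s ^ 2) ≤ zagreb2 T ∧
      zagreb2 T ≤ (t : ℝ) * s * (s + t - 1)) ∧
    (t = 2 * s - 1 →
      1 / 2 * (2 * (s : ℝ) - 1) * (3 * s + 3 * s ^ 2 - 4) ≤ zagreb2 T ∧
      zagreb2 T ≤ (s : ℝ) * (2 * s - 1) * (3 * s - 2)) := by
  letI := Classical.decEq V
  letI := Classical.decRel T.Adj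
  have hdeg : ∀ v, deg T v = T.degree v := fun _ => rfl
  simp only [hdeg] at hdegs hct hcs hc1
  -- the unique vertex of degree t
  obtain ⟨w, hw⟩ := Finset.card_eq_one.mp hct
  have hwdeg : T.degree w = t := by
    have : w ∈ Finset.univ.filter fun v => T.degree v = t := by rw [hw]; simp
    simpa using this
  have hwuniq : ∀ v, T.degree v = t → v = w := by
    intro v hv
    have : v ∈ Finset.univ.filter fun v => T.degree v = t := by simp [hv]
    rw [hw] at this; simpa using this
  -- unique neighbor of degree-one vertices
  have uniq_nb : ∀ {x y z : V}, T.degree x = 1 → T.Adj x y → T.Adj x z → y = z := by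
    intro x y z hx hxy hxz
    have h1 : (T.neighborFinset x).card = 1 := by rwa [T.card_neighborFinset_eq_degree]
    obtain ⟨a, ha⟩ := Finset.card_eq_one.mp h1
    have hy : y ∈ T.neighborFinset x := by simpa using hxy
    have hz : z ∈ T.neighborFinset x := by simpa using hxz
    rw [ha] at hy hz; simp at hy hz; rw [hy, hz]
  -- no edge between two degree-one vertices
  have no11 : ∀ u v : V, T.Adj u v → T.degree u = 1 → T.degree v = 1 → False := by
    intro u v huv hu hv
    have hwu : w ≠ u := fun h => by rw [h, hu] at hwdeg; omega
    have hwv : w ≠ v := fun h => by rw [h, hv] at hwdeg; omega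
    obtain ⟨p⟩ := hT.isConnected.preconnected w u
    have hq := p.toPath.2
    set q := p.toPath.1 with hqdef
    have hqr : (q.reverse).IsPath := hq.reverse
    obtain ⟨x, hux, r, hr⟩ := SimpleGraph.Walk.exists_eq_cons_of_ne (Ne.symm hwu) q.reverse
    have hxv : x = v := uniq_nb hu hux huv
    subst hxv
    obtain ⟨y, hvy, r', hr'⟩ := SimpleGraph.Walk.exists_eq_cons_of_ne (Ne.symm hwv) r
    have hyu : y = u := uniq_nb hv hvy (T.adj_symm huv)
    subst hyu
    rw [hr, hr'] at hqr
    rw [SimpleGraph.Walk.isPath_def] at hqr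
    simp [SimpleGraph.Walk.support_cons] at hqr
  -- w has a neighbor of degree s
  have hex_s : ∃ x, T.Adj w x ∧ T.degree x = s := by
    have hpos : 0 < (Finset.univ.filter fun v => T.degree v = s).card := by omega
    obtain ⟨v0, hv0⟩ := Finset.card_pos.mp hpos
    have hv0s : T.degree v0 = s := by simpa using hv0
    have hv0w : v0 ≠ w := fun h => by rw [h, hwdeg] at hv0s; omega
    obtain ⟨p⟩ := hT.isConnected.preconnected w v0
    have hq := p.toPath.2
    set q := p.toPath.1 with hqdef
    obtain ⟨x, hwx, r, hr⟩ := SimpleGraph.Walk.exists_eq_cons_of_ne (Ne.symm hv0w) q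
    refine ⟨x, hwx, ?_⟩
    have hxw : x ≠ w := fun h => hwx.ne (h.symm)
    have hxt : T.degree x ≠ t := fun h => hxw (hwuniq x h)
    rcases hdegs x with h | h | h
    · exact absurd h hxt
    · exact h
    · exfalso
      by_cases hxv : x = v0
      · rw [hxv, hv0s] at h; omega
      · obtain ⟨y, hxy, r', hr'⟩ := SimpleGraph.Walk.exists_eq_cons_of_ne hxv r
        have : y = w := uniq_nb h hxy (T.adj_symm hwx)
        subst this
        rw [hr, hr'] at hq
        rw [SimpleGraph.Walk.isPath_def] at hq
        simp [SimpleGraph.Walk.support_cons] at hq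

  -- vertex and edge counts
  have hd_ts : Disjoint (Finset.univ.filter fun v => T.degree v = t)
      (Finset.univ.filter fun v => T.degree v = s) := by
    rw [Finset.disjoint_left]; intro v h1 h2; simp at h1 h2; omega
  have hd_t1 : Disjoint ((Finset.univ.filter fun v => T.degree v = t) ∪
      (Finset.univ.filter fun v => T.degree v = s))
      (Finset.univ.filter fun v => T.degree v = 1) := by
    rw [Finset.disjoint_left]; intro v h1 h2
    simp at h1 h2
    rcases h1 with h | h <;> omega
  have hcardV : Fintype.card V = 1 + t + t * (s - 1) := by
    rw [← Finset.card_univ]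
    have huniv : (Finset.univ : Finset V) =
        ((Finset.univ.filter fun v => T.degree v = t) ∪
         (Finset.univ.filter fun v => T.degree v = s)) ∪
        (Finset.univ.filter fun v => T.degree v = 1) := by
      ext v
      simp only [Finset.mem_union, Finset.mem_filter, Finset.mem_univ, true_and, true_iff]
      rcases hdegs v with h | h | h <;> tauto
    rw [huniv, Finset.card_union_of_disjoint hd_t1, Finset.card_union_of_disjoint hd_ts,
      hct, hcs, hc1]
  have hs1 : s - 1 + 1 = s := by omega
  have hecard : T.edgeFinset.card = t * s := by
    have h1 := hT.card_edgeFinset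
    rw [hcardV] at h1
    have h2 : t * (s - 1) + t = t * s := by
      calc t * (s - 1) + t = t * ((s - 1) + 1) := by ring
        _ = t * s := by rw [hs1]
    omega
  -- the natural-number degree product function on edges
  set g : Sym2 V → ℕ :=
    Sym2.lift ⟨fun u v => T.degree u * T.degree v, fun u v => Nat.mul_comm _ _⟩ with hgdef
  have hgmk : ∀ u v : V, g s(u, v) = T.degree u * T.degree v := fun u v => rfl
  have hgdprod : ∀ e, dprod T e = (g e : ℝ) := by
    intro e
    induction e using Sym2.ind with
    | _ u v =>
      show ((deg T u : ℝ) * deg T v) = _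
      rw [hgmk, hdeg, hdeg]; push_cast; ring
  -- arithmetic distinctions between the possible products
  have hv1 : t * s ≠ t := by nlinarith
  have hv2 : t * s ≠ s * s := by nlinarith
  have hv3 : t * s ≠ s := by nlinarith
  have hv4 : t ≠ s * s := by nlinarith
  have hv5 : t ≠ s := by omega
  have hv6 : s * s ≠ s := by nlinarith
  -- classification of adjacent degree pairs
  have hpair : ∀ u v : V, T.Adj u v →
      (T.degree u = t ∧ T.degree v = s) ∨ (T.degree u = s ∧ T.degree v = t) ∨
      (T.degree u = t ∧ T.degree v = 1) ∨ (T.degree u = 1 ∧ T.degree v = t) ∨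
      (T.degree u = s ∧ T.degree v = s) ∨
      (T.degree u = s ∧ T.degree v = 1) ∨ (T.degree u = 1 ∧ T.degree v = s) := by
    intro u v huv
    rcases hdegs u with hu | hu | hu <;> rcases hdegs v with hv | hv | hv
    · exact absurd ((hwuniq u hu).trans (hwuniq v hv).symm) huv.ne
    · exact Or.inl ⟨hu, hv⟩
    · exact Or.inr (Or.inr (Or.inl ⟨hu, hv⟩))
    · exact Or.inr (Or.inl ⟨hu, hv⟩)
    · exact Or.inr (Or.inr (Or.inr (Or.inr (Or.inl ⟨hu, hv⟩))))
    · exact Or.inr (Or.inr (Or.inr (Or.inr (Or.inr (Or.inl ⟨hu, hv⟩)))))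
    · exact Or.inr (Or.inr (Or.inr (Or.inl ⟨hu, hv⟩)))
    · exact Or.inr (Or.inr (Or.inr (Or.inr (Or.inr (Or.inr ⟨hu, hv⟩)))))
    · exact absurd (no11 u v huv hu hv) not_false
  -- the four classes of edges
  set A := T.edgeFinset.filter (fun e => g e = t * s) with hAdef
  set B := T.edgeFinset.filter (fun e => g e = t) with hBdef
  set C := T.edgeFinset.filter (fun e => g e = s * s) with hCdef
  set D := T.edgeFinset.filter (fun e => g e = s) with hDdef
  have hdisjf : ∀ {m n : ℕ}, m ≠ n →
      Disjoint (T.edgeFinset.filter (fun e => g e = m))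
        (T.edgeFinset.filter (fun e => g e = n)) := by
    intro m n hmn
    rw [Finset.disjoint_left]
    intro e h1 h2
    exact hmn (((Finset.mem_filter.mp h1).2).symm.trans (Finset.mem_filter.mp h2).2)
  have hdAB : Disjoint A B := hdisjf hv1
  have hdCD : Disjoint C D := hdisjf hv6
  have hdABCD : Disjoint (A ∪ B) (C ∪ D) := by
    rw [Finset.disjoint_union_left, Finset.disjoint_union_right, Finset.disjoint_union_right]
    exact ⟨⟨hdisjf hv2, hdisjf hv3⟩, ⟨hdisjf hv4, hdisjf (by omega)⟩⟩
  -- every edge lies in one of the classes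
  have hval : ∀ e ∈ T.edgeFinset, g e = t * s ∨ g e = t ∨ g e = s * s ∨ g e = s := by
    intro e he
    induction e using Sym2.ind with
    | _ u v =>
      have hadj : T.Adj u v := by
        rwa [SimpleGraph.mem_edgeFinset, SimpleGraph.mem_edgeSet] at he
      rcases hpair u v hadj with ⟨h1, h2⟩ | ⟨h1, h2⟩ | ⟨h1, h2⟩ | ⟨h1, h2⟩ | ⟨h1, h2⟩ |
        ⟨h1, h2⟩ | ⟨h1, h2⟩ <;> rw [hgmk, h1, h2] <;>
        simp [Nat.mul_comm, Nat.mul_one, Nat.one_mul]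
  have hcover : T.edgeFinset = (A ∪ B) ∪ (C ∪ D) := by
    ext e
    simp only [hAdef, hBdef, hCdef, hDdef, Finset.mem_union, Finset.mem_filter]
    constructor
    · intro he
      rcases hval e he with h | h | h | h
      · exact Or.inl (Or.inl ⟨he, h⟩)
      · exact Or.inl (Or.inr ⟨he, h⟩)
      · exact Or.inr (Or.inl ⟨he, h⟩)
      · exact Or.inr (Or.inr ⟨he, h⟩)
    · intro h
      rcases h with (h | h) | (h | h) <;> exact h.1
  have htotal : A.card + B.card + C.card + D.card = t * s := by
    have := hecard
    rw [hcover, Finset.card_union_of_disjoint hdABCD, Finset.card_union_of_disjoint hdAB,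
      Finset.card_union_of_disjoint hdCD] at this
    omega

  -- edges at w are exactly those with product t*s or t
  have hmemw : ∀ u v : V, T.Adj u v →
      ((g s(u,v) = t * s ∨ g s(u,v) = t) ↔ (u = w ∨ v = w)) := by
    intro u v huv
    constructor
    · intro h
      rw [hgmk] at h
      rcases hpair u v huv with ⟨h1, h2⟩ | ⟨h1, h2⟩ | ⟨h1, h2⟩ | ⟨h1, h2⟩ | ⟨h1, h2⟩ |
        ⟨h1, h2⟩ | ⟨h1, h2⟩
      · exact Or.inl (hwuniq u h1)
      · exact Or.inr (hwuniq v h2)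
      · exact Or.inl (hwuniq u h1)
      · exact Or.inr (hwuniq v h2)
      · exfalso; rw [h1, h2] at h
        rcases h with h | h
        exacts [hv2 h.symm, hv4 h.symm]
      · exfalso; rw [h1, h2, Nat.mul_one] at h
        rcases h with h | h
        exacts [hv3 h.symm, hv5 h.symm]
      · exfalso; rw [h1, h2, Nat.one_mul] at h
        rcases h with h | h
        exacts [hv3 h.symm, hv5 h.symm]
    · intro h
      rw [hgmk]
      rcases h with h | h
      · have h1 : T.degree u = t := h ▸ hwdeg
        have h2 : T.degree v ≠ t := fun hv => huv.ne (h.trans (hwuniq v hv).symm)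
        rcases hdegs v with hv | hv | hv
        · exact absurd hv h2
        · exact Or.inl (by rw [h1, hv])
        · exact Or.inr (by rw [h1, hv, Nat.mul_one])
      · have h1 : T.degree v = t := h ▸ hwdeg
        have h2 : T.degree u ≠ t := fun hu => huv.ne ((hwuniq u hu).trans h.symm)
        rcases hdegs u with hu | hu | hu
        · exact absurd hu h2
        · exact Or.inl (by rw [h1, hu, Nat.mul_comm])
        · exact Or.inr (by rw [h1, hu, Nat.one_mul])
  have hABcard : A.card + B.card = t := by
    rw [← Finset.card_union_of_disjoint hdAB]
    have hset : A ∪ B = T.edgeFinset.filter (fun e => w ∈ e) := by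
      ext e
      induction e using Sym2.ind with
      | _ u v =>
        simp only [hAdef, hBdef, Finset.mem_union, Finset.mem_filter]
        by_cases hE : s(u, v) ∈ T.edgeFinset
        · have huv : T.Adj u v := by
            rwa [SimpleGraph.mem_edgeFinset, SimpleGraph.mem_edgeSet] at hE
          have h1 := hmemw u v huv
          have h2 : w ∈ s(u, v) ↔ (u = w ∨ v = w) := by
            rw [Sym2.mem_iff]
            constructor
            · rintro (h | h)
              exacts [Or.inl h.symm, Or.inr h.symm]
            · rintro (h | h)
              exacts [Or.inl h.symm, Or.inr h.symm]
          constructor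
          · rintro (⟨he, hg⟩ | ⟨he, hg⟩)
            · exact ⟨he, h2.mpr (h1.mp (Or.inl hg))⟩
            · exact ⟨he, h2.mpr (h1.mp (Or.inr hg))⟩
          · rintro ⟨he, hw'⟩
            rcases h1.mpr (h2.mp hw') with h | h
            · exact Or.inl ⟨he, h⟩
            · exact Or.inr ⟨he, h⟩
        · constructor
          · rintro (⟨he, _⟩ | ⟨he, _⟩) <;> exact absurd he hE
          · rintro ⟨he, _⟩; exact absurd he hE
    rw [hset, ← SimpleGraph.incidenceFinset_eq_filter,
      SimpleGraph.card_incidenceFinset_eq_degree, hwdeg]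
  -- edges with a degree-one endpoint
  have hnb : ∀ v : V, T.degree v = 1 → ∃ u, T.Adj v u := by
    intro v hv
    rw [← SimpleGraph.degree_pos_iff_exists_adj]
    omega
  set f : V → V := fun v => if h : ∃ u, T.Adj v u then h.choose else v with hfdef
  have haf : ∀ v : V, T.degree v = 1 → T.Adj v (f v) := by
    intro v hv
    have h := hnb v hv
    simp only [hfdef, dif_pos h]
    exact h.choose_spec
  have hdBD : Disjoint B D := hdisjf hv5
  have hBDcard : B.card + D.card = t * (s - 1) := by
    rw [← Finset.card_union_of_disjoint hdBD, ← hc1]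
    symm
    apply Finset.card_bij (fun v _ => s(v, f v))
    · intro v hv
      have hv1 : T.degree v = 1 := by simpa using hv
      have hadj := haf v hv1
      have hE : s(v, f v) ∈ T.edgeFinset := by
        rw [SimpleGraph.mem_edgeFinset, SimpleGraph.mem_edgeSet]; exact hadj
      rw [Finset.mem_union, hBdef, hDdef]
      rcases hdegs (f v) with h | h | h
      · exact Or.inl (Finset.mem_filter.mpr ⟨hE, by rw [hgmk, hv1, h, Nat.one_mul]⟩)
      · exact Or.inr (Finset.mem_filter.mpr ⟨hE, by rw [hgmk, hv1, h, Nat.one_mul]⟩)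
      · exact absurd (no11 v (f v) hadj hv1 h) not_false
    · intro v1 hv1 v2 hv2 heq
      have h1 : T.degree v1 = 1 := by simpa using hv1
      have h2 : T.degree v2 = 1 := by simpa using hv2
      rw [Sym2.eq_iff] at heq
      rcases heq with ⟨h, _⟩ | ⟨ha, hb⟩
      · exact h
      · exfalso
        apply no11 v1 v2 _ h1 h2
        rw [← hb]
        exact haf v1 h1
    · intro e he
      rw [Finset.mem_union, hBdef, hDdef] at he
      have heE : e ∈ T.edgeFinset := by
        rcases he with h | h <;> exact (Finset.mem_filter.mp h).1
      have hge : g e = t ∨ g e = s := by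
        rcases he with h | h
        · exact Or.inl (Finset.mem_filter.mp h).2
        · exact Or.inr (Finset.mem_filter.mp h).2
      clear he
      induction e using Sym2.ind with
      | _ u v =>
        have hadj : T.Adj u v := by
          rwa [SimpleGraph.mem_edgeFinset, SimpleGraph.mem_edgeSet] at heE
        rw [hgmk] at hge
        have h1 : T.degree u = 1 ∨ T.degree v = 1 := by
          rcases hpair u v hadj with ⟨ha, hb⟩ | ⟨ha, hb⟩ | ⟨ha, hb⟩ | ⟨ha, hb⟩ | ⟨ha, hb⟩ |
            ⟨ha, hb⟩ | ⟨ha, hb⟩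
          · exfalso; rw [ha, hb] at hge
            rcases hge with h | h
            exacts [hv1 h, hv3 h]
          · exfalso; rw [ha, hb] at hge
            rcases hge with h | h
            exacts [hv1 ((Nat.mul_comm t s).trans h), hv3 ((Nat.mul_comm t s).trans h)]
          · exact Or.inr hb
          · exact Or.inl ha
          · exfalso; rw [ha, hb] at hge
            rcases hge with h | h
            exacts [hv4 h.symm, hv6 h]
          · exact Or.inr hb
          · exact Or.inl ha
        rcases h1 with h1 | h1
        · refine ⟨u, by simp [h1], ?_⟩
          rw [uniq_nb h1 (haf u h1) hadj]
        · refine ⟨v, by simp [h1], ?_⟩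
          rw [uniq_nb h1 (haf v h1) hadj.symm]
          exact Sym2.eq_swap
  -- at least one edge from w to an s-vertex
  obtain ⟨x, hwx, hxs⟩ := hex_s
  have hA1 : 1 ≤ A.card := by
    have hxA : s(w, x) ∈ A := by
      rw [hAdef, Finset.mem_filter]
      refine ⟨?_, ?_⟩
      · rw [SimpleGraph.mem_edgeFinset, SimpleGraph.mem_edgeSet]; exact hwx
      · rw [hgmk, hwdeg, hxs]
    exact Finset.card_pos.mpr ⟨_, hxA⟩
  -- the value of the Zagreb index
  have hfs : ∀ (n : ℕ), ∑ e ∈ T.edgeFinset.filter (fun e => g e = n), (g e : ℝ)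
      = (T.edgeFinset.filter (fun e => g e = n)).card * ((n : ℕ) : ℝ) := by
    intro n
    have hcongr : ∀ e ∈ T.edgeFinset.filter (fun e => g e = n), (g e : ℝ) = ((n : ℕ) : ℝ) :=
      fun e he => by rw [(Finset.mem_filter.mp he).2]
    rw [Finset.sum_congr rfl hcongr, Finset.sum_const, nsmul_eq_mul]
  have hzag : zagreb2 T = A.card * ((t * s : ℕ) : ℝ) + B.card * ((t : ℕ) : ℝ)
      + C.card * ((s * s : ℕ) : ℝ) + D.card * ((s : ℕ) : ℝ) := by
    have h0 : zagreb2 T = ∑ e ∈ T.edgeFinset, (g e : ℝ) :=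
      Finset.sum_congr rfl fun e _ => hgdprod e
    rw [h0, hcover, Finset.sum_union hdABCD, Finset.sum_union hdAB, Finset.sum_union hdCD,
      hAdef, hBdef, hCdef, hDdef, hfs, hfs, hfs, hfs]
    ring
  -- pass to the reals
  have haR : (A.card : ℝ) + B.card = t := by exact_mod_cast hABcard
  have hcastts : ((t * (s - 1) : ℕ) : ℝ) = t * s - t := by
    rw [Nat.cast_mul, Nat.cast_sub (show 1 ≤ s by omega)]
    push_cast
    ring
  have hbR : (B.card : ℝ) + D.card = t * s - t := by
    have h2 : ((B.card + D.card : ℕ) : ℝ) = ((t * (s - 1) : ℕ) : ℝ) := by rw [hBDcard]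
    rw [hcastts] at h2
    push_cast at h2
    linarith
  have htotR : (A.card : ℝ) + B.card + C.card + D.card = t * s := by exact_mod_cast htotal
  have ha1R : (1 : ℝ) ≤ A.card := by exact_mod_cast hA1
  have hb0 : (0 : ℝ) ≤ B.card := Nat.cast_nonneg _
  have hSeq : zagreb2 T
      = (t : ℝ) * s * ((t : ℝ) + s - 1) - (B.card : ℝ) * ((s : ℝ) - 1) * ((t : ℝ) - s) := by
    have ha' : (A.card : ℝ) = t - B.card := by linarith
    have hc' : (C.card : ℝ) = B.card := by linarith
    have hd' : (D.card : ℝ) = t * s - t - B.card := by linarith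
    rw [hzag, ha', hc', hd']
    push_cast
    ring
  have hbt : (B.card : ℝ) ≤ (t : ℝ) - 1 := by
    have h1 : B.card + 1 ≤ t := by omega
    have h2 : ((B.card + 1 : ℕ) : ℝ) ≤ t := by exact_mod_cast h1
    push_cast at h2
    linarith
  have hsR : (2 : ℝ) ≤ s := by exact_mod_cast hs
  have hstR : (s : ℝ) + 1 ≤ t := by exact_mod_cast hst
  have lower : 1 / 2 * (t : ℝ) * (3 * t - t ^ 2 - 5 * s + 2 * s * t + 3 * s ^ 2)
      ≤ zagreb2 T := by
    rw [hSeq]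
    have k1 : (0 : ℝ) ≤ ((t : ℝ) - s) * (((t : ℝ) - 1 - B.card) * ((s : ℝ) - 1)) :=
      mul_nonneg (by linarith) (mul_nonneg (by linarith) (by linarith))
    have k2 : (0 : ℝ) ≤ ((t : ℝ) - s) * ((t : ℝ) * ((t : ℝ) - s - 1)) :=
      mul_nonneg (by linarith) (mul_nonneg (by linarith) (by linarith))
    have k3 : (0 : ℝ) ≤ ((t : ℝ) - s) * ((s : ℝ) - 1) :=
      mul_nonneg (by linarith) (by linarith)
    nlinarith [k1, k2, k3]
  have upper : zagreb2 T ≤ (t : ℝ) * s * (s + t - 1) := by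
    rw [hSeq]
    have k : (0 : ℝ) ≤ (B.card : ℝ) * ((s : ℝ) - 1) * ((t : ℝ) - s) :=
      mul_nonneg (mul_nonneg hb0 (by linarith)) (by linarith)
    nlinarith [k]
  refine ⟨fun _ => ⟨lower, upper⟩, fun ht2 => ?_⟩
  have htR : (t : ℝ) = 2 * s - 1 := by
    have h1 : t + 1 = 2 * s := by omega
    have h2 : ((t : ℕ) : ℝ) + 1 = 2 * (s : ℝ) := by exact_mod_cast h1
    linarith
  constructor
  · have he : 1 / 2 * (2 * (s : ℝ) - 1) * (3 * s + 3 * s ^ 2 - 4)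
        = 1 / 2 * (t : ℝ) * (3 * t - t ^ 2 - 5 * s + 2 * s * t + 3 * s ^ 2) := by
      rw [htR]; ring
    rw [he]; exact lower
  · have he : (s : ℝ) * (2 * s - 1) * (3 * s - 2) = (t : ℝ) * s * (s + t - 1) := by
      rw [htR]; ring
    rw [he]; exact upper
end
end
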